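/- arXiv:1902.05754 — 6 statements merged into one kernel-verified Lean document; each statement's English description precedes it below -/
import Mathlib

section
/- Let d ≥ 1 and let f : ℝ^d → ℝ be L_f-Lipschitz with C_π := ∫_{ℝ^d} exp(−f(θ)) dθ ∈ (0, ∞). Then for every ρ > 0, the total variation distance between the Gaussian-smoothed density π_ρ and π satisfies (1/2) ∫_{ℝ^d} |π_ρ(θ) − π(θ)| dθ ≤ 1 − D_{−d}(L_f ρ) / D_{−d}(−L_f ρ). -/
open MeasureTheory

noncomputable section

/-- ℝ^d with the Euclidean (ℓ²) structure. -/
abbrev En (d : ℕ) := EuclideanSpace ℝ (Fin d)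

/-- The parabolic cylinder function
`D_{−d}(z) = (exp(−z²/4)/Γ(d)) ∫₀^∞ exp(−xz − x²/2) x^{d−1} dx`. -/
noncomputable def pcf (d : ℕ) (z : ℝ) : ℝ :=
  (Real.exp (-z ^ 2 / 4) / Real.Gamma d) *
    ∫ x in Set.Ioi (0 : ℝ), Real.exp (-(x * z) - x ^ 2 / 2) * x ^ (d - 1)

/-- The normalized density `π(θ) = exp(−f(θ))/C_π`. -/
noncomputable def nrmDensity {d : ℕ} (f : En d → ℝ) (θ : En d) : ℝ :=
  Real.exp (-f θ) / ∫ θ' : En d, Real.exp (-f θ')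

/-- The normalized Gaussian-smoothed density
`π_ρ(θ) = (1/C_{π_ρ}) ∫ exp(−f(z) − ‖z−θ‖²/(2ρ²)) dz`. -/
noncomputable def gaussSmoothed {d : ℕ} (f : En d → ℝ) (ρ : ℝ) (θ : En d) : ℝ :=
  (∫ z : En d, Real.exp (-f z - ‖z - θ‖ ^ 2 / (2 * ρ ^ 2))) /
    ∫ θ' : En d, ∫ z : En d, Real.exp (-f z - ‖z - θ'‖ ^ 2 / (2 * ρ ^ 2))

/-- The (unnormalized) smoothed density. -/
noncomputable def Nfun {d : ℕ} (f : En d → ℝ) (ρ : ℝ) (θ : En d) : ℝ :=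
  ∫ z : En d, Real.exp (-f z - ‖z - θ‖ ^ 2 / (2 * ρ ^ 2))

lemma aux_abs_eq (a b : ℝ) : |a - b| = (a - b) + 2 * max (b - a) 0 := by
  rcases le_total a b with h | h
  · rw [abs_of_nonpos (sub_nonpos.mpr h), max_eq_left (sub_nonneg.mpr h)]; ring
  · rw [abs_of_nonneg (sub_nonneg.mpr h), max_eq_right (sub_nonpos.mpr h)]; ring

lemma aux_J_integrable (n : ℕ) (z : ℝ) :
    IntegrableOn (fun x : ℝ => Real.exp (-(x * z) - x ^ 2 / 2) * x ^ n) (Set.Ioi 0) := by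
  have h2 : IntegrableOn (fun x : ℝ => x ^ (n : ℝ) * Real.exp (-(1/4) * x ^ 2)) (Set.Ioi 0) :=
    integrableOn_rpow_mul_exp_neg_mul_sq (by norm_num)
      (by exact_mod_cast lt_of_lt_of_le neg_one_lt_zero (by positivity))
  have h2' : IntegrableOn (fun x : ℝ => x ^ n * Real.exp (-(1/4) * x ^ 2)) (Set.Ioi 0) :=
    h2.congr_fun (fun x _ => by dsimp only; rw [Real.rpow_natCast]) measurableSet_Ioi
  apply Integrable.mono' (h2'.const_mul (Real.exp (z ^ 2)))
  · apply Continuous.aestronglyMeasurable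
    fun_prop
  · filter_upwards [ae_restrict_mem measurableSet_Ioi] with x hx
    have hx0 : (0:ℝ) < x := hx
    rw [Real.norm_eq_abs, abs_of_nonneg (by positivity)]
    have hexp : Real.exp (-(x * z) - x ^ 2 / 2) ≤ Real.exp (z ^ 2) * Real.exp (-(1/4) * x ^ 2) := by
      rw [← Real.exp_add, Real.exp_le_exp]
      nlinarith [sq_nonneg (z + x / 2)]
    calc Real.exp (-(x * z) - x ^ 2 / 2) * x ^ n
        ≤ (Real.exp (z ^ 2) * Real.exp (-(1/4) * x ^ 2)) * x ^ n :=
          mul_le_mul_of_nonneg_right hexp (by positivity)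
      _ = Real.exp (z ^ 2) * (x ^ n * Real.exp (-(1/4) * x ^ 2)) := by ring

lemma aux_Jpos (n : ℕ) (z : ℝ) :
    0 < ∫ x in Set.Ioi (0:ℝ), Real.exp (-(x * z) - x ^ 2 / 2) * x ^ n := by
  rw [setIntegral_pos_iff_support_of_nonneg_ae ?_ (aux_J_integrable n z)]
  · refine lt_of_lt_of_le ?_ (measure_mono (?_ :
      Set.Ioi (0:ℝ) ⊆ Function.support (fun x => Real.exp (-(x * z) - x ^ 2 / 2) * x ^ n) ∩ Set.Ioi 0))
    · simp [Real.volume_Ioi]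
    · intro x hx
      have hx0 : (0:ℝ) < x := hx
      exact ⟨ne_of_gt (by positivity), hx⟩
  · filter_upwards [ae_restrict_mem measurableSet_Ioi] with x hx
    have hx0 : (0:ℝ) < x := hx
    positivity

lemma aux_nontrivial (d : ℕ) (hd : 1 ≤ d) : Nontrivial (En d) := by
  have : 0 < Module.finrank ℝ (En d) := by rw [finrank_euclideanSpace_fin]; omega
  exact Module.nontrivial_of_finrank_pos this

lemma aux_gauss_int (d : ℕ) {b : ℝ} (hb : 0 < b) :
    Integrable (fun u : En d => Real.exp (-b * ‖u‖ ^ 2)) := by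
  have h := (GaussianFourier.integrable_cexp_neg_mul_sq_norm_add (V := En d)
      (b := (b : ℂ)) (by simpa using hb) 0 (0 : En d)).norm
  apply h.congr
  filter_upwards with v
  simp [Complex.norm_exp, ← Complex.ofReal_pow]

lemma aux_radial_integrable (d : ℕ) {ρ : ℝ} (hρ : 0 < ρ) (c : ℝ) :
    Integrable (fun u : En d => Real.exp (-(c * ‖u‖) - ‖u‖ ^ 2 / (2 * ρ ^ 2))) := by
  have h := (aux_gauss_int d (b := 1/(4*ρ^2)) (by positivity)).const_mul
      (Real.exp (c ^ 2 * ρ ^ 2))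
  apply h.mono'
  · apply Continuous.aestronglyMeasurable
    fun_prop
  · filter_upwards with u
    have hr : (0:ℝ) ≤ ‖u‖ := norm_nonneg u
    rw [Real.norm_eq_abs, abs_of_nonneg (Real.exp_pos _).le, ← Real.exp_add, Real.exp_le_exp]
    have key : c ^ 2 * ρ ^ 2 + c * ‖u‖ + ‖u‖ ^ 2 / (4 * ρ ^ 2)
        = (c * ρ + ‖u‖ / (2 * ρ)) ^ 2 := by
      field_simp
      ring
    have h2 : ‖u‖ ^ 2 / (2 * ρ ^ 2) = 2 * (‖u‖ ^ 2 / (4 * ρ ^ 2)) := by ring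
    have h4 : (1 / (4 * ρ ^ 2)) * ‖u‖ ^ 2 = ‖u‖ ^ 2 / (4 * ρ ^ 2) := by ring
    nlinarith [sq_nonneg (c * ρ + ‖u‖ / (2 * ρ))]

lemma aux_radial_eq (d : ℕ) (hd : 1 ≤ d) {ρ : ℝ} (hρ : 0 < ρ) (c : ℝ) :
    ∫ u : En d, Real.exp (-(c * ‖u‖) - ‖u‖ ^ 2 / (2 * ρ ^ 2)) =
      ((d : ℝ) * (volume (Metric.ball (0 : En d) 1)).toReal * ρ ^ d) *
        ∫ x in Set.Ioi (0 : ℝ), Real.exp (-(x * (c * ρ)) - x ^ 2 / 2) * x ^ (d - 1) := by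
  have hnt : Nontrivial (En d) := aux_nontrivial d hd
  have h := MeasureTheory.integral_fun_norm_addHaar (volume : Measure (En d))
      (fun r : ℝ => Real.exp (-(c * r) - r ^ 2 / (2 * ρ ^ 2)))
  rw [finrank_euclideanSpace_fin (𝕜 := ℝ)] at h
  simp only [nsmul_eq_mul, smul_eq_mul] at h
  rw [h]
  have h3 := MeasureTheory.integral_comp_mul_left_Ioi
      (fun y => y ^ (d - 1) * Real.exp (-(c * y) - y ^ 2 / (2 * ρ ^ 2))) 0 hρ
  simp only [mul_zero, smul_eq_mul] at h3
  have h5 : ∫ x in Set.Ioi (0:ℝ),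
      (ρ * x) ^ (d - 1) * Real.exp (-(c * (ρ * x)) - (ρ * x) ^ 2 / (2 * ρ ^ 2))
      = ρ ^ (d - 1) * ∫ x in Set.Ioi (0:ℝ),
          Real.exp (-(x * (c * ρ)) - x ^ 2 / 2) * x ^ (d - 1) := by
    rw [← integral_const_mul]
    apply setIntegral_congr_fun measurableSet_Ioi
    intro x hx
    dsimp only
    have e1 : (ρ * x) ^ 2 / (2 * ρ ^ 2) = x ^ 2 / 2 := by
      field_simp
    have e2 : c * (ρ * x) = x * (c * ρ) := by ring
    rw [e1, e2, mul_pow]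
    ring
  have hS : ∫ y in Set.Ioi (0:ℝ), y ^ (d - 1) * Real.exp (-(c * y) - y ^ 2 / (2 * ρ ^ 2))
      = ρ ^ d * ∫ x in Set.Ioi (0:ℝ), Real.exp (-(x * (c * ρ)) - x ^ 2 / 2) * x ^ (d - 1) := by
    have hstep : ∫ y in Set.Ioi (0:ℝ), y ^ (d - 1) * Real.exp (-(c * y) - y ^ 2 / (2 * ρ ^ 2))
        = ρ * (ρ⁻¹ * ∫ y in Set.Ioi (0:ℝ),
            y ^ (d - 1) * Real.exp (-(c * y) - y ^ 2 / (2 * ρ ^ 2))) := by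
      rw [← mul_assoc, mul_inv_cancel₀ hρ.ne', one_mul]
    have hpow : ρ * ρ ^ (d - 1) = ρ ^ d := by
      rw [← pow_succ']
      congr 1
      omega
    rw [hstep, ← h3, h5, ← mul_assoc, hpow]
  rw [hS, measureReal_def]
  ring

/-- Abstract total-variation bound. -/
lemma aux_tv {α : Type*} [MeasurableSpace α] {μ : Measure α} (p q : α → ℝ) (c : ℝ)
    (hp : Integrable p μ) (hq : Integrable q μ) (hp0 : ∀ x, 0 ≤ p x)
    (hc1 : c ≤ 1) (hpq : ∀ x, c * p x ≤ q x)
    (hp1 : ∫ x, p x ∂μ = 1) (hq1 : ∫ x, q x ∂μ = 1) :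
    (1/2) * ∫ x, |q x - p x| ∂μ ≤ 1 - c := by
  have hmax : Integrable (fun x => max (p x - q x) 0) μ := (hp.sub hq).pos_part
  have hsub : Integrable (fun x => q x - p x) μ := hq.sub hp
  have heq : (fun x => |q x - p x|)
      = fun x => (q x - p x) + 2 * max (p x - q x) 0 := funext fun x => aux_abs_eq _ _
  calc (1/2) * ∫ x, |q x - p x| ∂μ
      = (1/2) * ∫ x, ((q x - p x) + 2 * max (p x - q x) 0) ∂μ := by rw [heq]
    _ = (1/2) * ((∫ x, (q x - p x) ∂μ) + 2 * ∫ x, max (p x - q x) 0 ∂μ) := by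
        rw [integral_add hsub (hmax.const_mul 2), integral_const_mul]
    _ = ∫ x, max (p x - q x) 0 ∂μ := by
        rw [integral_sub hq hp, hp1, hq1]; ring
    _ ≤ ∫ x, (1 - c) * p x ∂μ := by
        refine integral_mono hmax (hp.const_mul _) (fun x => ?_)
        refine max_le (by nlinarith [hpq x, hp0 x]) (by nlinarith [hp0 x])
    _ = 1 - c := by rw [integral_const_mul, hp1, mul_one]

/-- Lipschitz case: for an `L`-Lipschitz potential `f` with `C_π ∈ (0,∞)`, the total variation
distance between the Gaussian-smoothed density `π_ρ` and `π` is at most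
`1 − D_{−d}(Lρ)/D_{−d}(−Lρ)`. -/
theorem statement6 {d : ℕ} (hd : 1 ≤ d) (f : En d → ℝ) (L : ℝ)
    (hLip : ∀ θ η : En d, |f θ - f η| ≤ L * ‖θ - η‖)
    (hint : Integrable (fun θ : En d => Real.exp (-f θ)))
    (hpos : 0 < ∫ θ : En d, Real.exp (-f θ))
    (ρ : ℝ) (hρ : 0 < ρ) :
    (1 / 2) * ∫ θ : En d, |gaussSmoothed f ρ θ - nrmDensity f θ| ≤
      1 - pcf d (L * ρ) / pcf d (-(L * ρ)) := by
  classical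
  have hnt : Nontrivial (En d) := aux_nontrivial d hd
  -- f is continuous
  have hfc : Continuous f := by
    have hLip' : LipschitzWith (Real.toNNReal L) f := by
      apply LipschitzWith.of_dist_le_mul
      intro x y
      rw [Real.dist_eq, dist_eq_norm]
      exact (hLip x y).trans
        (mul_le_mul_of_nonneg_right (Real.le_coe_toNNReal L) (norm_nonneg _))
    exact hLip'.continuous
  -- L is nonnegative
  have hL : 0 ≤ L := by
    obtain ⟨x, hx⟩ := exists_ne (0 : En d)
    have h2 : (0:ℝ) ≤ L * ‖x - 0‖ := le_trans (abs_nonneg _) (hLip x 0)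
    have h3 : 0 < ‖x - 0‖ := by rw [sub_zero]; exact norm_pos_iff.mpr hx
    nlinarith
  -- radial integral formulas
  have hAeq := aux_radial_eq d hd hρ L
  have hBeq := aux_radial_eq d hd hρ (-L)
  rw [show -L * ρ = -(L * ρ) from by ring] at hBeq
  set J1 : ℝ := ∫ x in Set.Ioi (0 : ℝ), Real.exp (-(x * (L * ρ)) - x ^ 2 / 2) * x ^ (d - 1)
    with hJ1def
  set J2 : ℝ := ∫ x in Set.Ioi (0 : ℝ), Real.exp (-(x * -(L * ρ)) - x ^ 2 / 2) * x ^ (d - 1)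
    with hJ2def
  set K : ℝ := (d : ℝ) * (volume (Metric.ball (0 : En d) 1)).toReal * ρ ^ d with hKdef
  have hJ1 : 0 < J1 := aux_Jpos (d - 1) (L * ρ)
  have hJ2 : 0 < J2 := aux_Jpos (d - 1) (-(L * ρ))
  have hK : 0 < K := by
    rw [hKdef]
    have hb1 : 0 < (volume (Metric.ball (0 : En d) 1)).toReal :=
      ENNReal.toReal_pos (Metric.measure_ball_pos volume 0 one_pos).ne'
        (measure_ball_lt_top).ne
    have hdp : (0:ℝ) < d := by exact_mod_cast Nat.lt_of_lt_of_le Nat.zero_lt_one hd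
    exact mul_pos (mul_pos hdp hb1) (pow_pos hρ d)
  -- J1 ≤ J2
  have hJle : J1 ≤ J2 := by
    rw [hJ1def, hJ2def]
    refine setIntegral_mono_on (aux_J_integrable _ _) (aux_J_integrable _ _)
      measurableSet_Ioi (fun x hx => ?_)
    have hx0 : (0:ℝ) < x := hx
    refine mul_le_mul_of_nonneg_right (Real.exp_le_exp.mpr ?_) (by positivity)
    have : 0 ≤ x * (L * ρ) := by positivity
    linarith
  -- Gaussian-type integrability on En d
  have hGint : ∀ c : ℝ,
      Integrable (fun u : En d => Real.exp (-(c * ‖u‖) - ‖u‖ ^ 2 / (2 * ρ ^ 2))) :=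
    fun c => aux_radial_integrable d hρ c
  have hGshift : ∀ (c : ℝ) (θ : En d),
      Integrable (fun z : En d => Real.exp (-(c * ‖z - θ‖) - ‖z - θ‖ ^ 2 / (2 * ρ ^ 2))) :=
    fun c θ => (hGint c).comp_sub_right θ
  have hGval : ∀ (c : ℝ) (θ : En d),
      ∫ z : En d, Real.exp (-(c * ‖z - θ‖) - ‖z - θ‖ ^ 2 / (2 * ρ ^ 2))
        = ∫ u : En d, Real.exp (-(c * ‖u‖) - ‖u‖ ^ 2 / (2 * ρ ^ 2)) :=
    fun c θ => integral_sub_right_eq_self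
      (fun u : En d => Real.exp (-(c * ‖u‖) - ‖u‖ ^ 2 / (2 * ρ ^ 2))) θ
  -- pointwise comparison
  have hlow : ∀ θ z : En d,
      Real.exp (-f θ) * Real.exp (-(L * ‖z - θ‖) - ‖z - θ‖ ^ 2 / (2 * ρ ^ 2))
        ≤ Real.exp (-f z - ‖z - θ‖ ^ 2 / (2 * ρ ^ 2)) := by
    intro θ z
    rw [← Real.exp_add, Real.exp_le_exp]
    have h := abs_le.mp (hLip z θ)
    linarith [h.2]
  have hhigh : ∀ θ z : En d,
      Real.exp (-f z - ‖z - θ‖ ^ 2 / (2 * ρ ^ 2))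
        ≤ Real.exp (-f θ) * Real.exp (-(-L * ‖z - θ‖) - ‖z - θ‖ ^ 2 / (2 * ρ ^ 2)) := by
    intro θ z
    rw [← Real.exp_add, Real.exp_le_exp]
    have h := abs_le.mp (hLip z θ)
    linarith [h.1]
  -- integrability for each θ
  have hIz : ∀ θ : En d,
      Integrable (fun z : En d => Real.exp (-f z - ‖z - θ‖ ^ 2 / (2 * ρ ^ 2))) := by
    intro θ
    apply Integrable.mono' ((hGshift (-L) θ).const_mul (Real.exp (-f θ)))
    · apply Continuous.aestronglyMeasurable
      fun_prop
    · filter_upwards with z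
      rw [Real.norm_eq_abs, abs_of_nonneg (Real.exp_pos _).le]
      exact hhigh θ z
  -- bounds on Nfun
  have hNge : ∀ θ : En d, Real.exp (-f θ) * (K * J1) ≤ Nfun f ρ θ := by
    intro θ
    have hval : ∫ z : En d, Real.exp (-(L * ‖z - θ‖) - ‖z - θ‖ ^ 2 / (2 * ρ ^ 2)) = K * J1 := by
      rw [hGval L θ]; exact hAeq
    have h1 : Real.exp (-f θ) * (K * J1)
        = ∫ z : En d, Real.exp (-f θ) *
            Real.exp (-(L * ‖z - θ‖) - ‖z - θ‖ ^ 2 / (2 * ρ ^ 2)) := by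
      rw [integral_const_mul, hval]
    rw [h1]
    exact integral_mono ((hGshift L θ).const_mul _) (hIz θ) (fun z => hlow θ z)
  have hNle : ∀ θ : En d, Nfun f ρ θ ≤ Real.exp (-f θ) * (K * J2) := by
    intro θ
    have hval : ∫ z : En d, Real.exp (-(-L * ‖z - θ‖) - ‖z - θ‖ ^ 2 / (2 * ρ ^ 2)) = K * J2 := by
      rw [hGval (-L) θ]; exact hBeq
    calc Nfun f ρ θ
        ≤ ∫ z : En d, Real.exp (-f θ) *
            Real.exp (-(-L * ‖z - θ‖) - ‖z - θ‖ ^ 2 / (2 * ρ ^ 2)) :=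
          integral_mono (hIz θ) ((hGshift (-L) θ).const_mul _) (fun z => hhigh θ z)
      _ = Real.exp (-f θ) * (K * J2) := by rw [integral_const_mul, hval]
  have hN0 : ∀ θ : En d, 0 ≤ Nfun f ρ θ :=
    fun θ => integral_nonneg (fun z => (Real.exp_pos _).le)
  -- N is integrable
  have hFc : Continuous fun p : En d × En d =>
      Real.exp (-f p.2 - ‖p.2 - p.1‖ ^ 2 / (2 * ρ ^ 2)) := by fun_prop
  have hNmeas : AEStronglyMeasurable (Nfun f ρ) (volume : Measure (En d)) := by
    exact (hFc.aestronglyMeasurable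
      (μ := (volume : Measure (En d)).prod volume)).integral_prod_right'
  have hNint : Integrable (Nfun f ρ) := by
    refine Integrable.mono' (hint.mul_const (K * J2)) hNmeas ?_
    filter_upwards with θ
    rw [Real.norm_eq_abs, abs_of_nonneg (hN0 θ)]
    exact hNle θ
  -- normalization constants
  set Cπ : ℝ := ∫ θ : En d, Real.exp (-f θ) with hCπdef
  set Cρ : ℝ := ∫ θ' : En d, Nfun f ρ θ' with hCρdef
  have hCρ_lb : Cπ * (K * J1) ≤ Cρ := by
    rw [hCπdef, hCρdef, ← integral_mul_const]
    exact integral_mono (hint.mul_const _) hNint hNge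
  have hCρ_ub : Cρ ≤ Cπ * (K * J2) := by
    rw [hCπdef, hCρdef, ← integral_mul_const]
    exact integral_mono hNint (hint.mul_const _) hNle
  have hCρ_pos : 0 < Cρ :=
    lt_of_lt_of_le (mul_pos hpos (mul_pos hK hJ1)) hCρ_lb
  -- rfl facts
  have hgs : ∀ θ : En d, gaussSmoothed f ρ θ = Nfun f ρ θ / Cρ := by
    intro θ; rw [hCρdef]; rfl
  have hnrm : ∀ θ : En d, nrmDensity f θ = Real.exp (-f θ) / Cπ := by
    intro θ; rw [hCπdef]; rfl
  -- the pcf ratio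
  have hpref : 0 < Real.exp (-(L * ρ) ^ 2 / 4) / Real.Gamma d := by
    apply div_pos (Real.exp_pos _)
    apply Real.Gamma_pos_of_pos
    exact_mod_cast Nat.lt_of_lt_of_le Nat.zero_lt_one hd
  have hratio : pcf d (L * ρ) / pcf d (-(L * ρ)) = J1 / J2 := by
    unfold pcf
    rw [neg_sq, ← hJ1def, ← hJ2def]
    exact mul_div_mul_left _ _ hpref.ne'
  rw [hratio]
  -- apply the abstract TV bound
  refine aux_tv (nrmDensity f) (gaussSmoothed f ρ) (J1 / J2) ?_ ?_ ?_ ?_ ?_ ?_ ?_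
  · have : Integrable (fun θ : En d => Real.exp (-f θ) / Cπ) := hint.div_const _
    exact this.congr (by filter_upwards with θ; rw [hnrm θ])
  · have : Integrable (fun θ : En d => Nfun f ρ θ / Cρ) := hNint.div_const _
    exact this.congr (by filter_upwards with θ; rw [hgs θ])
  · intro θ
    rw [hnrm θ]
    exact div_nonneg (Real.exp_pos _).le hpos.le
  · exact (div_le_one hJ2).mpr hJle
  · intro θ
    rw [hnrm θ, hgs θ]
    calc (J1 / J2) * (Real.exp (-f θ) / Cπ)
        = (Real.exp (-f θ) * (K * J1)) / (Cπ * (K * J2)) := by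
          field_simp
      _ ≤ Nfun f ρ θ / (Cπ * (K * J2)) := by
          have hden : 0 < Cπ * (K * J2) := mul_pos hpos (mul_pos hK hJ2)
          rw [div_le_div_iff₀ hden hden]
          exact mul_le_mul_of_nonneg_right (hNge θ) hden.le
      _ ≤ Nfun f ρ θ / Cρ := by
          have hden : 0 < Cπ * (K * J2) := mul_pos hpos (mul_pos hK hJ2)
          rw [div_le_div_iff₀ hden hCρ_pos]
          exact mul_le_mul_of_nonneg_left hCρ_ub (hN0 θ)
  · have : ∀ θ : En d, nrmDensity f θ = Real.exp (-f θ) / Cπ := hnrm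
    calc ∫ θ : En d, nrmDensity f θ = ∫ θ : En d, Real.exp (-f θ) / Cπ := by
          exact integral_congr_ae (by filter_upwards with θ; rw [hnrm θ])
      _ = 1 := by rw [integral_div, ← hCπdef, div_self hpos.ne']
  · calc ∫ θ : En d, gaussSmoothed f ρ θ = ∫ θ : En d, Nfun f ρ θ / Cρ := by
          exact integral_congr_ae (by filter_upwards with θ; rw [hgs θ])
      _ = 1 := by rw [integral_div, ← hCρdef, div_self hCρ_pos.ne']
end
end

section
/- Let d ≥ 1 be an integer and L ≥ 0. Then lim_{ρ → 0⁺} (1 − D_{−d}(Lρ)/D_{−d}(−Lρ)) / ρ = 2√2 · Γ((d+1)/2) / Γ(d/2) · L. Consequently, for f L-Lipschitz the total variation bound of the Lipschitz case satisfies ‖π_ρ − π‖_TV ≤ ρ L · 2√2 Γ((d+1)/2)/Γ(d/2) + o(ρ) as ρ → 0⁺. -/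
open MeasureTheory

noncomputable section

open Filter Asymptotics


open MeasureTheory Real Set Filter

def Iint (d : ℕ) (s : ℝ) : ℝ :=
  ∫ x in Set.Ioi (0 : ℝ), Real.exp (-(x * s) - x ^ 2 / 2) * x ^ (d - 1)

/-- integrability of `x^n * exp (c*x - x^2/2)` on `Ioi 0`. -/
lemma integrableOn_pow_exp (n : ℕ) (c : ℝ) :
    IntegrableOn (fun x : ℝ => x ^ n * Real.exp (c * x - x ^ 2 / 2)) (Set.Ioi 0) := by
  have hbig : IntegrableOn (fun x : ℝ => Real.exp (c ^ 2) * (x ^ (n : ℝ) * Real.exp (-(1/4) * x ^ 2))) (Set.Ioi 0) :=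
    (integrableOn_rpow_mul_exp_neg_mul_sq (by norm_num) (by exact lt_of_lt_of_le (by norm_num) (Nat.cast_nonneg n))).const_mul _
  refine hbig.mono' ?_ ?_
  · exact ((continuous_pow n).mul (by continuity)).aestronglyMeasurable
  · filter_upwards [ae_restrict_mem measurableSet_Ioi] with x hx
    have hx0 : (0:ℝ) < x := hx
    rw [Real.norm_eq_abs, abs_mul, abs_of_nonneg (by positivity : (0:ℝ) ≤ x ^ n),
      abs_of_nonneg (Real.exp_pos _).le, Real.rpow_natCast]
    have h1 : c * x - x ^ 2 / 2 ≤ c ^ 2 + -(1/4) * x ^ 2 := by nlinarith [sq_nonneg (x - 2*c)]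
    calc x ^ n * Real.exp (c * x - x ^ 2 / 2)
        ≤ x ^ n * (Real.exp (c ^ 2) * Real.exp (-(1/4) * x ^ 2)) := by
          rw [← Real.exp_add]
          exact mul_le_mul_of_nonneg_left (Real.exp_le_exp.2 h1) (by positivity)
      _ = Real.exp (c ^ 2) * (x ^ n * Real.exp (-(1/4) * x ^ 2)) := by ring

lemma integrableOn_Iint (d : ℕ) (s : ℝ) :
    IntegrableOn (fun x : ℝ => Real.exp (-(x * s) - x ^ 2 / 2) * x ^ (d - 1)) (Set.Ioi 0) := by
  have := integrableOn_pow_exp (d - 1) (-s)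
  refine this.congr_fun ?_ measurableSet_Ioi
  intro x hx
  ring_nf

lemma Iint_pos (d : ℕ) (s : ℝ) : 0 < Iint d s := by
  rw [Iint]
  rw [setIntegral_pos_iff_support_of_nonneg_ae]
  · refine lt_of_lt_of_le ?_ (measure_mono (show Set.Ioi (0:ℝ) ⊆ _ ∩ Set.Ioi 0 from fun x hx => ⟨Function.mem_support.2 (ne_of_gt (by have hx' : (0:ℝ) < x := hx; positivity)), hx⟩))
    · simp [Real.volume_Ioi]
  · filter_upwards [ae_restrict_mem measurableSet_Ioi] with x hx
    have hx' : (0:ℝ) < x := hx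
    positivity
  · exact integrableOn_Iint d s

lemma integral_pow_exp_gauss (n : ℕ) :
    ∫ x in Set.Ioi (0:ℝ), x ^ n * Real.exp (-x ^ 2 / 2)
      = (1/2:ℝ) ^ (-((n:ℝ) + 1)/2) * (1/2) * Real.Gamma (((n:ℝ) + 1)/2) := by
  rw [← integral_rpow_mul_exp_neg_mul_rpow (by norm_num : (0:ℝ) < 2)
      (by exact lt_of_lt_of_le (by norm_num) (Nat.cast_nonneg n)) (by norm_num : (0:ℝ) < 1/2)]
  refine setIntegral_congr_fun measurableSet_Ioi (fun x hx => ?_)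
  rw [Real.rpow_natCast, Real.rpow_two]
  rw [show -(1/2:ℝ) * x ^ 2 = -x ^ 2 / 2 by ring]

lemma Iint_zero_eq {d : ℕ} (hd : 1 ≤ d) :
    Iint d 0 = (1/2:ℝ) ^ (-(d:ℝ)/2) * (1/2) * Real.Gamma ((d:ℝ)/2) := by
  have h1 : Iint d 0 = ∫ x in Set.Ioi (0:ℝ), x ^ (d-1) * Real.exp (-x ^ 2 / 2) := by
    rw [Iint]
    refine setIntegral_congr_fun measurableSet_Ioi (fun x hx => ?_)
    ring_nf
  rw [h1, integral_pow_exp_gauss]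
  have : ((d - 1 : ℕ) : ℝ) + 1 = (d:ℝ) := by
    have := Nat.cast_sub hd (R := ℝ); push_cast [this]; ring
  rw [this]

lemma sqrt2_fact : (1/2:ℝ) ^ (-(1:ℝ)/2) = Real.sqrt 2 := by
  rw [one_div, Real.inv_rpow (by norm_num), ← Real.rpow_neg (by norm_num), Real.sqrt_eq_rpow]
  norm_num [← Complex.ofReal_pow]

lemma const_eq {d : ℕ} (hd : 1 ≤ d) :
    2 * (∫ x in Set.Ioi (0:ℝ), x ^ d * Real.exp (-x ^ 2 / 2)) / Iint d 0
      = 2 * Real.sqrt 2 * Real.Gamma (((d:ℝ) + 1)/2) / Real.Gamma ((d:ℝ)/2) := by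
  rw [integral_pow_exp_gauss, Iint_zero_eq hd]
  have hA : (1/2:ℝ)^(-((d:ℝ)+1)/2) = Real.sqrt 2 * (1/2:ℝ)^(-(d:ℝ)/2) := by
    rw [show -((d:ℝ)+1)/2 = (-(1:ℝ)/2) + (-(d:ℝ)/2) by ring,
      Real.rpow_add (by norm_num), sqrt2_fact]
  rw [hA]
  have hB : (0:ℝ) < (1/2:ℝ)^(-(d:ℝ)/2) := by positivity
  have hG : (0:ℝ) < Real.Gamma ((d:ℝ)/2) := Real.Gamma_pos_of_pos (by positivity)
  field_simp

lemma exp_diff_le {t : ℝ} (ht : 0 ≤ t) :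
    Real.exp t - Real.exp (-t) ≤ 2 * t * Real.exp (2*t) := by
  have h1 : 1 + (-(2*t)) ≤ Real.exp (-(2*t)) := by linarith [Real.add_one_le_exp (-(2*t))]
  have h2 : Real.exp (-(2*t)) * Real.exp (2*t) = 1 := by rw [← Real.exp_add]; simp
  have h3 : Real.exp (-t) ≤ 1 := Real.exp_le_one_iff.2 (by linarith)
  have h4 : 1 ≤ Real.exp t := Real.one_le_exp ht
  have h5 : Real.exp (2*t) = Real.exp t * Real.exp t := by
    rw [← Real.exp_add]; ring_nf
  have h6 : Real.exp t * Real.exp (-t) = 1 := by rw [← Real.exp_add]; simp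
  nlinarith [Real.exp_pos (2*t), Real.exp_pos (-t), Real.exp_pos t]

lemma tendsto_diff_integral {d : ℕ} (hd : 1 ≤ d) {L : ℝ} (hL : 0 ≤ L) :
    Tendsto (fun ρ : ℝ => ∫ x in Set.Ioi (0:ℝ),
        ((Real.exp (L*ρ*x) - Real.exp (-(L*ρ*x)))/ρ) * (Real.exp (-x^2/2) * x^(d-1)))
      (nhdsWithin 0 (Set.Ioi 0))
      (nhds (∫ x in Set.Ioi (0:ℝ), (2*(L*x)) * (Real.exp (-x^2/2) * x^(d-1)))) := by
  have hbound : IntegrableOn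
      (fun x : ℝ => 2*L*(x^((d-1)+1) * Real.exp ((2*L)*x - x^2/2))) (Set.Ioi 0) :=
    (integrableOn_pow_exp ((d-1)+1) (2*L)).const_mul _
  refine tendsto_integral_filter_of_dominated_convergence _ ?_ ?_ hbound ?_
  · filter_upwards [self_mem_nhdsWithin] with ρ (hρ : (0:ℝ) < ρ)
    exact (Continuous.aestronglyMeasurable (by continuity)).restrict
  · filter_upwards [Ioc_mem_nhdsGT_of_mem (Set.left_mem_Ico.2 zero_lt_one)] with ρ hρ
    filter_upwards [ae_restrict_mem measurableSet_Ioi] with x hx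
    have hx0 : (0:ℝ) < x := hx
    have hρ0 : (0:ℝ) < ρ := hρ.1
    have hρ1 : ρ ≤ 1 := hρ.2
    have hw : (0:ℝ) ≤ Real.exp (-x^2/2) * x^(d-1) := by positivity
    have hq0 : 0 ≤ (Real.exp (L*ρ*x) - Real.exp (-(L*ρ*x)))/ρ := by
      apply div_nonneg _ hρ0.le
      have h0 : (0:ℝ) ≤ L*ρ*x := by positivity
      have : -(L*ρ*x) ≤ L*ρ*x := by linarith
      linarith [Real.exp_le_exp.2 this]
    have key : (Real.exp (L*ρ*x) - Real.exp (-(L*ρ*x)))/ρ ≤ 2*L*x*Real.exp ((2*L)*x) := by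
      have h := exp_diff_le (t := L*ρ*x) (by positivity)
      have h2 : Real.exp (2*(L*ρ*x)) ≤ Real.exp ((2*L)*x) := by
        apply Real.exp_le_exp.2
        nlinarith [mul_le_of_le_one_left (by positivity : (0:ℝ) ≤ L*x) hρ1]
      have h3 : Real.exp (L*ρ*x) - Real.exp (-(L*ρ*x)) ≤ 2*(L*x)*Real.exp ((2*L)*x) * ρ := by
        nlinarith [mul_le_mul_of_nonneg_left h2 (by positivity : (0:ℝ) ≤ 2*(L*ρ*x))]
      rw [div_le_iff₀ hρ0]
      nlinarith
    rw [Real.norm_eq_abs, abs_mul, abs_of_nonneg hq0, abs_of_nonneg hw]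
    have hbeq : 2*L*(x^((d-1)+1) * Real.exp ((2*L)*x - x^2/2))
        = (2*L*x*Real.exp ((2*L)*x)) * (Real.exp (-x^2/2) * x^(d-1)) := by
      rw [pow_succ, show (2*L)*x - x^2/2 = (2*L)*x + (-x^2/2) by ring, Real.exp_add]; ring
    rw [hbeq]
    exact mul_le_mul_of_nonneg_right key hw
  · filter_upwards [ae_restrict_mem measurableSet_Ioi] with x hx
    have hg : HasDerivAt (fun ρ:ℝ => Real.exp (L*ρ*x) - Real.exp (-(L*ρ*x))) (2*(L*x)) 0 := by
      have h1 : HasDerivAt (fun ρ:ℝ => L*ρ*x) (L*x) 0 := by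
        simpa using ((hasDerivAt_id (0:ℝ)).const_mul L).mul_const x
      have h2 := h1.exp
      have h3 := h1.neg.exp
      have := h2.sub h3
      simp only [mul_zero, zero_mul, neg_zero, Real.exp_zero, one_mul, Pi.neg_apply, Pi.sub_def] at this
      rw [show (2*(L*x)) = L*x - -(L*x) by ring]
      exact this
    have hs := hasDerivAt_iff_tendsto_slope.1 hg
    have hs2 : Tendsto (fun ρ : ℝ => (Real.exp (L*ρ*x) - Real.exp (-(L*ρ*x)))/ρ)
        (nhdsWithin 0 (Set.Ioi 0)) (nhds (2*(L*x))) := by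
      have := hs.mono_left (nhdsWithin_mono (0:ℝ) (fun y hy => ne_of_gt hy))
      refine this.congr (fun ρ => ?_)
      simp [slope_def_field]
    exact hs2.mul_const _

lemma tendsto_Iint_cont {d : ℕ} {L : ℝ} (hL : 0 ≤ L) :
    Tendsto (fun ρ : ℝ => Iint d (-(L*ρ))) (nhdsWithin 0 (Set.Ioi 0)) (nhds (Iint d 0)) := by
  have hbound : IntegrableOn (fun x : ℝ => x^(d-1) * Real.exp (L*x - x^2/2)) (Set.Ioi 0) :=
    integrableOn_pow_exp (d-1) L
  simp only [Iint]
  refine tendsto_integral_filter_of_dominated_convergence _ ?_ ?_ hbound ?_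
  · filter_upwards [self_mem_nhdsWithin] with ρ _
    exact (Continuous.aestronglyMeasurable (by continuity)).restrict
  · filter_upwards [Ioc_mem_nhdsGT_of_mem (Set.left_mem_Ico.2 zero_lt_one)] with ρ hρ
    filter_upwards [ae_restrict_mem measurableSet_Ioi] with x hx
    have hx0 : (0:ℝ) < x := hx
    have h1 : -(x * -(L*ρ)) - x^2/2 ≤ L*x - x^2/2 := by
      have : x*(L*ρ) ≤ x*L := by
        nlinarith [mul_le_of_le_one_right (by positivity : (0:ℝ) ≤ x*L) hρ.2]
      nlinarith
    rw [Real.norm_eq_abs, abs_mul, abs_of_nonneg (Real.exp_pos _).le,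
      abs_of_nonneg (by positivity : (0:ℝ) ≤ x^(d-1))]
    calc Real.exp (-(x * -(L*ρ)) - x^2/2) * x^(d-1)
        ≤ Real.exp (L*x - x^2/2) * x^(d-1) :=
          mul_le_mul_of_nonneg_right (Real.exp_le_exp.2 h1) (by positivity)
      _ = x^(d-1) * Real.exp (L*x - x^2/2) := by ring
  · filter_upwards [ae_restrict_mem measurableSet_Ioi] with x _
    have hc : Continuous (fun ρ : ℝ => Real.exp (-(x * -(L*ρ)) - x^2/2) * x^(d-1)) := by
      continuity
    have := (hc.tendsto 0).mono_left (nhdsWithin_le_nhds (s := Set.Ioi (0:ℝ)))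
    simpa using this

lemma part1 {d : ℕ} (hd : 1 ≤ d) {L : ℝ} (hL : 0 ≤ L) :
    Tendsto (fun ρ : ℝ => (1 - Iint d (L*ρ) / Iint d (-(L*ρ)))/ρ)
      (nhdsWithin 0 (Set.Ioi 0))
      (nhds (2 * Real.sqrt 2 * Real.Gamma (((d:ℝ)+1)/2) / Real.Gamma ((d:ℝ)/2) * L)) := by
  have hmain := (tendsto_diff_integral hd hL).mul
    ((tendsto_Iint_cont (d := d) hL).inv₀ (Iint_pos d 0).ne')
  have hval : (∫ x in Set.Ioi (0:ℝ), (2*(L*x)) * (Real.exp (-x^2/2) * x^(d-1)))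
      * (Iint d 0)⁻¹
      = 2 * Real.sqrt 2 * Real.Gamma (((d:ℝ)+1)/2) / Real.Gamma ((d:ℝ)/2) * L := by
    have h1 : (∫ x in Set.Ioi (0:ℝ), (2*(L*x)) * (Real.exp (-x^2/2) * x^(d-1)))
        = L * (2 * ∫ x in Set.Ioi (0:ℝ), x^d * Real.exp (-x^2/2)) := by
      rw [show L * (2 * ∫ x in Set.Ioi (0:ℝ), x^d * Real.exp (-x^2/2))
          = ∫ x in Set.Ioi (0:ℝ), (L*2) * (x^d * Real.exp (-x^2/2)) by
        rw [integral_const_mul]; ring]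
      refine setIntegral_congr_fun measurableSet_Ioi (fun x hx => ?_)
      rw [show x^d = x^((d-1)+1) by rw [Nat.sub_add_cancel hd]]
      rw [pow_succ]; ring
    rw [h1, ← const_eq hd]
    field_simp
  rw [← hval]
  refine hmain.congr' ?_
  filter_upwards [self_mem_nhdsWithin] with ρ (hρ : (0:ℝ) < ρ)
  have hA : (∫ x in Set.Ioi (0:ℝ),
      ((Real.exp (L*ρ*x) - Real.exp (-(L*ρ*x)))/ρ) * (Real.exp (-x^2/2) * x^(d-1)))
      = (Iint d (-(L*ρ)) - Iint d (L*ρ))/ρ := by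
    rw [Iint, Iint, ← integral_sub (integrableOn_Iint d _) (integrableOn_Iint d _),
      ← integral_div]
    refine setIntegral_congr_fun measurableSet_Ioi (fun x hx => ?_)
    rw [show -(x * -(L*ρ)) - x^2/2 = L*ρ*x + (-x^2/2) by ring,
      show -(x * (L*ρ)) - x^2/2 = -(L*ρ*x) + (-x^2/2) by ring,
      Real.exp_add, Real.exp_add]
    ring
  rw [hA]
  have hb := (Iint_pos d (-(L*ρ))).ne'
  have h2 : (1 - Iint d (L*ρ)/Iint d (-(L*ρ)))
      = (Iint d (-(L*ρ)) - Iint d (L*ρ)) * (Iint d (-(L*ρ)))⁻¹ := by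
    field_simp
  rw [h2]
  ring

-- PART2

lemma integrable_exp_neg_mul_sq_norm' {d : ℕ} {b : ℝ} (hb : 0 < b) :
    Integrable (fun z : En d => Real.exp (-b * ‖z‖^2)) := by
  have h := (GaussianFourier.integrable_cexp_neg_mul_sq_norm_add (V := En d) (b := (b:ℂ))
    (by simpa using hb) 0 0).norm
  refine h.congr (Filter.Eventually.of_forall fun z => ?_)
  simp only [Complex.norm_exp]
  norm_num [← Complex.ofReal_pow]

lemma integrable_radial {d : ℕ} {ρ : ℝ} (hρ : 0 < ρ) (c : ℝ) :
    Integrable (fun z : En d => Real.exp (c * ‖z‖ - ‖z‖^2 / (2*ρ^2))) := by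
  have hb : (0:ℝ) < 1/(4*ρ^2) := by positivity
  refine ((integrable_exp_neg_mul_sq_norm' (d := d) hb).const_mul
    (Real.exp (c^2*ρ^2))).mono' ?_ ?_
  · exact (Continuous.aestronglyMeasurable (by continuity))
  · refine Filter.Eventually.of_forall fun z => ?_
    rw [Real.norm_eq_abs, abs_of_nonneg (Real.exp_pos _).le, ← Real.exp_add]
    refine Real.exp_le_exp.2 ?_
    set n := ‖z‖
    rw [← sub_nonneg]
    have expand : (c^2*ρ^2 + -(1/(4*ρ^2)) * n^2) - (c * n - n^2/(2*ρ^2))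
        = (n - 2*c*ρ^2)^2/(4*ρ^2) := by field_simp; ring
    rw [expand]; positivity

lemma radial_eq {d : ℕ} (hd : 1 ≤ d) {ρ : ℝ} (hρ : 0 < ρ) (c : ℝ) :
    ∫ z : En d, Real.exp (c * ‖z‖ - ‖z‖^2 / (2*ρ^2))
      = ((d : ℝ) * (volume (Metric.ball (0 : En d) 1)).toReal * ρ^d) * Iint d (-(c*ρ)) := by
  haveI : Nonempty (Fin d) := ⟨⟨0, hd⟩⟩
  haveI : Nontrivial (En d) := inferInstance
  have hpolar := MeasureTheory.integral_fun_norm_addHaar (volume : Measure (En d))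
    (fun r : ℝ => Real.exp (c * r - r^2 / (2*ρ^2)))
  rw [hpolar]
  rw [finrank_euclideanSpace_fin]
  have hinner : ∫ y in Set.Ioi (0:ℝ), y ^ (d-1) • Real.exp (c * y - y^2 / (2*ρ^2))
      = ρ^d * Iint d (-(c*ρ)) := by
    have hcomp := MeasureTheory.integral_comp_mul_left_Ioi
      (fun y => y ^ (d-1) * Real.exp (c * y - y^2 / (2*ρ^2))) 0 hρ
    simp only [mul_zero, smul_eq_mul] at hcomp
    have h2 : ∫ x in Set.Ioi (0:ℝ),
        (ρ*x) ^ (d-1) * Real.exp (c * (ρ*x) - (ρ*x)^2 / (2*ρ^2))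
        = ρ^(d-1) * Iint d (-(c*ρ)) := by
      rw [Iint, ← integral_const_mul]
      refine setIntegral_congr_fun measurableSet_Ioi (fun x hx => ?_)
      rw [mul_pow, show c * (ρ*x) - (ρ*x)^2 / (2*ρ^2) = -(x * -(c*ρ)) - x^2/2 by
        field_simp]
      ring
    simp only [smul_eq_mul]
    rw [show (∫ y in Set.Ioi (0:ℝ), y ^ (d-1) * Real.exp (c * y - y^2 / (2*ρ^2)))
        = ρ * ∫ x in Set.Ioi (0:ℝ),
            (ρ*x) ^ (d-1) * Real.exp (c * (ρ*x) - (ρ*x)^2 / (2*ρ^2)) by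
      rw [hcomp]; field_simp]
    rw [h2, ← mul_assoc, show ρ * ρ^(d-1) = ρ^d by
      rw [← pow_succ']; congr 1; omega]
  rw [hinner]
  simp only [nsmul_eq_mul, smul_eq_mul, measureReal_def]
  ring

lemma tv_bound {d : ℕ} (hd : 1 ≤ d) {L : ℝ} (hL : 0 ≤ L) (f : En d → ℝ)
    (hf : ∀ θ η : En d, |f θ - f η| ≤ L * ‖θ - η‖)
    (hfi : Integrable (fun θ : En d => Real.exp (-f θ)))
    (hC : 0 < ∫ θ : En d, Real.exp (-f θ)) {ρ : ℝ} (hρ : 0 < ρ) :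
    (1 / 2) * (∫ θ : En d, |gaussSmoothed f ρ θ - nrmDensity f θ|)
      ≤ 1 - Iint d (L * ρ) / Iint d (-(L * ρ)) := by
  have hfc : Continuous f := by
    have : LipschitzWith (Real.toNNReal L) f := by
      refine LipschitzWith.of_dist_le_mul fun θ η => ?_
      rw [Real.coe_toNNReal L hL, Real.dist_eq, dist_eq_norm]
      exact hf θ η
    exact this.continuous
  set C := ∫ θ : En d, Real.exp (-f θ) with hCdef
  set K : ℝ → ℝ := fun c => ∫ z : En d, Real.exp (c * ‖z‖ - ‖z‖^2 / (2*ρ^2)) with hKdef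
  -- positivity of K
  have hvol : (0:ℝ) < (volume (Metric.ball (0 : En d) 1)).toReal := by
    haveI : Nonempty (Fin d) := ⟨⟨0, hd⟩⟩
    exact ENNReal.toReal_pos (Metric.measure_ball_pos _ _ one_pos).ne' measure_ball_lt_top.ne
  have hA : (0:ℝ) < (d : ℝ) * (volume (Metric.ball (0 : En d) 1)).toReal * ρ^d := by
    have : (0:ℝ) < (d:ℝ) := by exact_mod_cast hd
    positivity
  have hKeq : ∀ c : ℝ, K c = ((d : ℝ) * (volume (Metric.ball (0 : En d) 1)).toReal * ρ^d)
      * Iint d (-(c*ρ)) := fun c => radial_eq hd hρ c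
  have hKpos : ∀ c : ℝ, 0 < K c := fun c => by
    rw [hKeq c]; exact mul_pos hA (Iint_pos _ _)
  -- translated radial integrals
  have htr_int : ∀ (c : ℝ) (θ : En d),
      Integrable (fun z : En d => Real.exp (c * ‖z - θ‖ - ‖z - θ‖^2 / (2*ρ^2))) :=
    fun c θ => (integrable_radial hρ c).comp_sub_right θ
  have htr_eq : ∀ (c : ℝ) (θ : En d),
      ∫ z : En d, Real.exp (c * ‖z - θ‖ - ‖z - θ‖^2 / (2*ρ^2)) = K c :=
    fun c θ => integral_sub_right_eq_self
      (fun z : En d => Real.exp (c * ‖z‖ - ‖z‖^2 / (2*ρ^2))) θ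
  -- pointwise bounds on the smoothing integrand
  have hub : ∀ θ z : En d, Real.exp (-f z - ‖z - θ‖^2 / (2*ρ^2))
      ≤ Real.exp (-f θ) * Real.exp (L * ‖z - θ‖ - ‖z - θ‖^2 / (2*ρ^2)) := by
    intro θ z
    rw [← Real.exp_add]
    refine Real.exp_le_exp.2 ?_
    have h1 := (abs_le.1 (hf θ z)).2
    rw [← neg_sub z θ, norm_neg] at h1
    linarith
  have hlb : ∀ θ z : En d, Real.exp (-f θ) * Real.exp (-L * ‖z - θ‖ - ‖z - θ‖^2 / (2*ρ^2))
      ≤ Real.exp (-f z - ‖z - θ‖^2 / (2*ρ^2)) := by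
    intro θ z
    rw [← Real.exp_add]
    refine Real.exp_le_exp.2 ?_
    have h1 := (abs_le.1 (hf θ z)).1
    rw [← neg_sub z θ, norm_neg] at h1
    linarith
  set m : En d → ℝ := fun θ => ∫ z : En d, Real.exp (-f z - ‖z - θ‖^2 / (2*ρ^2)) with hmdef
  have hm_intg : ∀ θ : En d,
      Integrable (fun z : En d => Real.exp (-f z - ‖z - θ‖^2 / (2*ρ^2))) := by
    intro θ
    have hcont1 : Continuous (fun z : En d => Real.exp (-f z - ‖z - θ‖^2 / (2*ρ^2))) :=
      Real.continuous_exp.comp ((hfc.neg).sub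
        (((continuous_id.sub continuous_const).norm.pow 2).div_const _))
    refine ((htr_int L θ).const_mul (Real.exp (-f θ))).mono'
      hcont1.aestronglyMeasurable ?_
    refine Filter.Eventually.of_forall fun z => ?_
    rw [Real.norm_eq_abs, abs_of_nonneg (Real.exp_pos _).le]
    exact hub θ z
  have hm_nonneg : ∀ θ, 0 ≤ m θ :=
    fun θ => integral_nonneg fun z => (Real.exp_pos _).le
  have hm_ub : ∀ θ, m θ ≤ Real.exp (-f θ) * K L := by
    intro θ
    calc m θ ≤ ∫ z : En d, Real.exp (-f θ) * Real.exp (L * ‖z - θ‖ - ‖z - θ‖^2 / (2*ρ^2)) :=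
          integral_mono (hm_intg θ) ((htr_int L θ).const_mul _) (hub θ)
      _ = Real.exp (-f θ) * K L := by rw [integral_const_mul, htr_eq L θ]
  have hm_lb : ∀ θ, Real.exp (-f θ) * K (-L) ≤ m θ := by
    intro θ
    calc Real.exp (-f θ) * K (-L)
        = ∫ z : En d, Real.exp (-f θ) * Real.exp (-L * ‖z - θ‖ - ‖z - θ‖^2 / (2*ρ^2)) := by
          rw [integral_const_mul, htr_eq (-L) θ]
      _ ≤ m θ := integral_mono ((htr_int (-L) θ).const_mul _) (hm_intg θ) (hlb θ)
  have hm_meas : AEStronglyMeasurable m volume := by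
    have hF : Continuous (fun p : En d × En d => Real.exp (-f p.2 - ‖p.2 - p.1‖^2 / (2*ρ^2))) :=
      Real.continuous_exp.comp (((hfc.comp continuous_snd).neg).sub
        (((continuous_snd.sub continuous_fst).norm.pow 2).div_const _))
    exact (hF.stronglyMeasurable.integral_prod_right').aestronglyMeasurable
  have hm_int : Integrable m := by
    refine (hfi.mul_const (K L)).mono' hm_meas ?_
    refine Filter.Eventually.of_forall fun θ => ?_
    rw [Real.norm_eq_abs, abs_of_nonneg (hm_nonneg θ)]
    exact hm_ub θ
  set D := ∫ θ : En d, m θ with hDdef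
  have hD_ub : D ≤ C * K L := by
    calc D ≤ ∫ θ : En d, Real.exp (-f θ) * K L := integral_mono hm_int (hfi.mul_const _) hm_ub
      _ = C * K L := by rw [integral_mul_const]
  have hD_lb : C * K (-L) ≤ D := by
    calc C * K (-L) = ∫ θ : En d, Real.exp (-f θ) * K (-L) := by rw [integral_mul_const]
      _ ≤ D := integral_mono (hfi.mul_const _) hm_int hm_lb
  have hD_pos : 0 < D := lt_of_lt_of_le (mul_pos hC (hKpos (-L))) hD_lb
  -- express densities
  have hgs : ∀ θ, gaussSmoothed f ρ θ = m θ / D := fun θ => rfl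
  set ε : ℝ := 1 - K (-L) / K L with hεdef
  have hε_nonneg : 0 ≤ ε := by
    have hKK : K (-L) ≤ K L := by
      refine integral_mono (integrable_radial hρ (-L)) (integrable_radial hρ L) fun z => ?_
      refine Real.exp_le_exp.2 ?_
      nlinarith [norm_nonneg z, hL]
    rw [hεdef, sub_nonneg, div_le_one (hKpos L)]
    exact hKK
  -- pointwise key bound
  have hkey : ∀ θ, nrmDensity f θ - gaussSmoothed f ρ θ ≤ nrmDensity f θ * ε := by
    intro θ
    have hratio : nrmDensity f θ * (K (-L) / K L) ≤ gaussSmoothed f ρ θ := by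
      rw [hgs, nrmDensity, div_mul_div_comm]
      rw [div_le_div_iff₀ (mul_pos hC (hKpos L)) hD_pos]
      exact mul_le_mul (hm_lb θ) hD_ub hD_pos.le (hm_nonneg θ)
    have hnn : 0 ≤ nrmDensity f θ := by
      rw [nrmDensity]
      positivity
    rw [hεdef]
    nlinarith [hratio]
  have hπnn : ∀ θ, 0 ≤ nrmDensity f θ := by
    intro θ; rw [nrmDensity]; positivity
  have hπ_int : Integrable (nrmDensity f) := by
    have he : nrmDensity f = fun θ => Real.exp (-f θ) / C := rfl
    rw [he]; exact hfi.div_const C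
  have hπρ_int : Integrable (gaussSmoothed f ρ) := by
    have he : gaussSmoothed f ρ = fun θ => m θ / D := funext hgs
    rw [he]; exact hm_int.div_const D
  have hπ_tot : ∫ θ : En d, nrmDensity f θ = 1 := by
    have he : (fun θ : En d => nrmDensity f θ) = fun θ => Real.exp (-f θ) / C := rfl
    rw [he, integral_div, div_self hC.ne']
  have hπρ_tot : ∫ θ : En d, gaussSmoothed f ρ θ = 1 := by
    have he : (fun θ : En d => gaussSmoothed f ρ θ) = fun θ => m θ / D := funext hgs
    rw [he, integral_div, div_self hD_pos.ne']
  set g : En d → ℝ := fun θ => nrmDensity f θ - gaussSmoothed f ρ θ with hgdef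
  have hg_int : Integrable g := hπ_int.sub hπρ_int
  have hg_tot : ∫ θ, g θ = 0 := by
    rw [hgdef]
    rw [integral_sub hπ_int hπρ_int, hπ_tot, hπρ_tot, sub_self]
  have hgp_int : Integrable (fun θ => max (g θ) 0) := hg_int.pos_part
  have habs : ∀ θ, |g θ| = 2 * max (g θ) 0 - g θ := by
    intro θ
    rcases le_total 0 (g θ) with h | h
    · rw [abs_of_nonneg h, max_eq_left h]; ring
    · rw [abs_of_nonpos h, max_eq_right h]; ring
  have h1 : ∫ θ, |g θ| = 2 * ∫ θ, max (g θ) 0 := by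
    rw [integral_congr_ae (Filter.Eventually.of_forall habs),
      integral_sub (hgp_int.const_mul 2) hg_int, hg_tot, integral_const_mul]
    ring
  have h2 : ∫ θ, max (g θ) 0 ≤ ε := by
    calc ∫ θ, max (g θ) 0 ≤ ∫ θ, nrmDensity f θ * ε := by
          refine integral_mono hgp_int (hπ_int.mul_const ε) fun θ => ?_
          exact max_le (hkey θ) (mul_nonneg (hπnn θ) hε_nonneg)
      _ = ε := by rw [integral_mul_const, hπ_tot, one_mul]
  have hεeq : ε = 1 - Iint d (L * ρ) / Iint d (-(L * ρ)) := by
    rw [hεdef, hKeq, hKeq]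
    congr 1
    rw [show -(-L * ρ) = L * ρ by ring]
    exact mul_div_mul_left _ _ hA.ne'
  have habs2 : (fun θ => |gaussSmoothed f ρ θ - nrmDensity f θ|) = fun θ => |g θ| :=
    funext fun θ => abs_sub_comm _ _
  rw [habs2, h1, ← hεeq]
  calc (1/2 : ℝ) * (2 * ∫ θ : En d, max (g θ) 0) = ∫ θ : En d, max (g θ) 0 := by ring
    _ ≤ ε := h2


/-- Small-`ρ` expansion of the Lipschitz-case total variation bound:
`(1 − D_{−d}(Lρ)/D_{−d}(−Lρ))/ρ → 2√2 Γ((d+1)/2)/Γ(d/2) · L` as `ρ → 0⁺`; consequently, for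
an `L`-Lipschitz potential `f`, `‖π_ρ − π‖_TV ≤ ρ L · 2√2 Γ((d+1)/2)/Γ(d/2) + o(ρ)`. -/
theorem statement7 {d : ℕ} (hd : 1 ≤ d) (L : ℝ) (hL : 0 ≤ L) :
    Tendsto (fun ρ : ℝ => (1 - pcf d (L * ρ) / pcf d (-(L * ρ))) / ρ)
      (nhdsWithin 0 (Set.Ioi 0))
      (nhds (2 * Real.sqrt 2 * Real.Gamma (((d : ℝ) + 1) / 2) / Real.Gamma ((d : ℝ) / 2) * L)) ∧
    ∀ f : En d → ℝ, (∀ θ η : En d, |f θ - f η| ≤ L * ‖θ - η‖) →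
      Integrable (fun θ : En d => Real.exp (-f θ)) →
      (0 < ∫ θ : En d, Real.exp (-f θ)) →
      ∃ e : ℝ → ℝ, e =o[nhdsWithin 0 (Set.Ioi 0)] (fun ρ => ρ) ∧
        ∀ ρ : ℝ, 0 < ρ →
          (1 / 2) * (∫ θ : En d, |gaussSmoothed f ρ θ - nrmDensity f θ|) ≤
            ρ * L * (2 * Real.sqrt 2 * Real.Gamma (((d : ℝ) + 1) / 2) /
              Real.Gamma ((d : ℝ) / 2)) + e ρ := by
  set Cst : ℝ := 2 * Real.sqrt 2 * Real.Gamma (((d : ℝ) + 1) / 2) / Real.Gamma ((d : ℝ) / 2)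
    with hCstdef
  have hpcf : ∀ ρ : ℝ, pcf d (L * ρ) / pcf d (-(L * ρ)) = Iint d (L * ρ) / Iint d (-(L * ρ)) := by
    intro ρ
    have hΓ : 0 < Real.Gamma (d : ℝ) := Real.Gamma_pos_of_pos (by exact_mod_cast hd)
    have ha : Real.exp (-(L * ρ) ^ 2 / 4) / Real.Gamma (d : ℝ) ≠ 0 := by positivity
    have h1 : pcf d (L * ρ)
        = (Real.exp (-(L * ρ) ^ 2 / 4) / Real.Gamma (d : ℝ)) * Iint d (L * ρ) := rfl
    have h2 : pcf d (-(L * ρ))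
        = (Real.exp (-(L * ρ) ^ 2 / 4) / Real.Gamma (d : ℝ)) * Iint d (-(L * ρ)) := by
      rw [pcf, neg_sq]; rfl
    rw [h1, h2, mul_div_mul_left _ _ ha]
  constructor
  · refine (part1 hd hL).congr fun ρ => ?_
    rw [hpcf ρ]
  · intro f hf hfi hC
    refine ⟨fun ρ => (1 - Iint d (L * ρ) / Iint d (-(L * ρ))) - ρ * L * Cst, ?_, ?_⟩
    · rw [isLittleO_iff_tendsto']
      · have hlim : Tendsto (fun ρ : ℝ => (1 - Iint d (L * ρ) / Iint d (-(L * ρ))) / ρ - Cst * L)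
            (nhdsWithin 0 (Set.Ioi 0)) (nhds 0) := by
          simpa [hCstdef] using (part1 hd hL).sub_const (Cst * L)
        refine hlim.congr' ?_
        filter_upwards [self_mem_nhdsWithin] with ρ (hρ : (0:ℝ) < ρ)
        rw [eq_div_iff hρ.ne']
        field_simp
      · filter_upwards [self_mem_nhdsWithin] with ρ (hρ : (0:ℝ) < ρ)
        exact fun h => absurd h hρ.ne'
    · intro ρ hρ
      calc (1 / 2) * (∫ θ : En d, |gaussSmoothed f ρ θ - nrmDensity f θ|)
          ≤ 1 - Iint d (L * ρ) / Iint d (-(L * ρ)) := tv_bound hd hL f hf hfi hC hρ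
        _ = ρ * L * Cst + ((1 - Iint d (L * ρ) / Iint d (-(L * ρ))) - ρ * L * Cst) := by ring
end
end

section
/- Let d ≥ 1 and let f : ℝ^d → ℝ be convex and continuously differentiable with M_f-Lipschitz gradient, with C_π := ∫_{ℝ^d} exp(−f(θ)) dθ ∈ (0, ∞), and suppose 𝖬_f := ∫_{ℝ^d} ‖∇f(θ)‖₂² π(θ) dθ < ∞ where π := exp(−f)/C_π. Then for every ρ > 0, the total variation distance between the Gaussian-smoothed density π_ρ and π satisfies (1/2) ∫_{ℝ^d} |π_ρ(θ) − π(θ)| dθ ≤ 1 − (1 + 2ρ² M_f)^{−d/2} (1 − ρ⁴ M_f 𝖬_f / (1 + 2ρ² M_f)). -/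
open MeasureTheory

noncomputable section

open scoped RealInnerProductSpace

section AuxStatement8

lemma gauss_integrable {d : ℕ} {b : ℝ} (hb : 0 < b) :
    Integrable (fun v : En d => Real.exp (-b * ‖v‖ ^ 2)) := by
  have h := (GaussianFourier.integrable_cexp_neg_mul_sq_norm_add
      (V := En d) (b := (b : ℂ)) (by simpa using hb) 0 (0 : En d)).re
  refine h.congr (Filter.Eventually.of_forall fun v => ?_)
  have : (-(b : ℂ) * (‖v‖ : ℂ) ^ 2 + 0 * (⟪(0 : En d), v⟫ : ℂ)) = ((-b * ‖v‖ ^ 2 : ℝ) : ℂ) := by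
    push_cast; ring
  simp only [this, RCLike.re_to_complex, Complex.exp_ofReal_re]

lemma gauss_integral {d : ℕ} {b : ℝ} (hb : 0 < b) :
    ∫ v : En d, Real.exp (-b * ‖v‖ ^ 2) = (Real.pi / b) ^ ((d : ℝ) / 2) := by
  rw [GaussianFourier.integral_rexp_neg_mul_sq_norm hb]
  norm_num [finrank_euclideanSpace_fin]

lemma gauss_shift_integrable {d : ℕ} {b : ℝ} (hb : 0 < b) (c : En d) :
    Integrable (fun v : En d => Real.exp (-b * ‖v - c‖ ^ 2)) :=
  (gauss_integrable hb).comp_sub_right c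

lemma gauss_shift_integral {d : ℕ} {b : ℝ} (hb : 0 < b) (c : En d) :
    ∫ v : En d, Real.exp (-b * ‖v - c‖ ^ 2) = (Real.pi / b) ^ ((d : ℝ) / 2) := by
  rw [← gauss_integral (d := d) hb]
  exact integral_sub_right_eq_self (fun v : En d => Real.exp (-b * ‖v‖ ^ 2)) c

section Kernel

variable {d : ℕ} (f : En d → ℝ) (ρ : ℝ)

lemma kernel_eq (θ z : En d) :
    Real.exp (-f z - ‖z - θ‖ ^ 2 / (2 * ρ ^ 2))
      = Real.exp (-f z) * Real.exp (-(1 / (2 * ρ ^ 2)) * ‖θ - z‖ ^ 2) := by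
  rw [← Real.exp_add, norm_sub_rev]
  ring_nf

lemma kernel_int_z (hint : Integrable fun θ : En d => Real.exp (-f θ))
    (hcont : Continuous f) (θ : En d) :
    Integrable (fun z : En d => Real.exp (-f z - ‖z - θ‖ ^ 2 / (2 * ρ ^ 2))) := by
  refine hint.mono (Continuous.aestronglyMeasurable (by fun_prop))
    (Filter.Eventually.of_forall fun z => ?_)
  rw [Real.norm_eq_abs, abs_of_nonneg (Real.exp_pos _).le,
    Real.norm_eq_abs, abs_of_nonneg (Real.exp_pos _).le]
  apply Real.exp_le_exp.mpr
  have h0 : 0 ≤ ‖z - θ‖ ^ 2 / (2 * ρ ^ 2) := by positivity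
  linarith

lemma kernel_prod_integrable (hint : Integrable fun θ : En d => Real.exp (-f θ))
    (hcont : Continuous f) (hρ : 0 < ρ) :
    Integrable (fun p : En d × En d =>
      Real.exp (-f p.2 - ‖p.2 - p.1‖ ^ 2 / (2 * ρ ^ 2)))
      ((volume : Measure (En d)).prod volume) := by
  have hb0 : 0 < 1 / (2 * ρ ^ 2) := by positivity
  have hmeas : AEStronglyMeasurable (fun p : En d × En d =>
      Real.exp (-f p.2 - ‖p.2 - p.1‖ ^ 2 / (2 * ρ ^ 2)))
      ((volume : Measure (En d)).prod volume) :=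
    Continuous.aestronglyMeasurable (by fun_prop)
  rw [MeasureTheory.integrable_prod_iff' hmeas]
  constructor
  · refine Filter.Eventually.of_forall fun z => ?_
    have he : (fun θ : En d => Real.exp (-f z - ‖z - θ‖ ^ 2 / (2 * ρ ^ 2)))
        = fun θ => Real.exp (-f z) * Real.exp (-(1 / (2 * ρ ^ 2)) * ‖θ - z‖ ^ 2) := by
      funext θ; exact kernel_eq f ρ θ z
    rw [he]
    exact (gauss_shift_integrable hb0 z).const_mul _
  · have he : (fun z : En d =>
        ∫ θ : En d, ‖Real.exp (-f z - ‖z - θ‖ ^ 2 / (2 * ρ ^ 2))‖)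
        = fun z => Real.exp (-f z) * (Real.pi / (1 / (2 * ρ ^ 2))) ^ ((d : ℝ) / 2) := by
      funext z
      have h1 : ∀ θ : En d, ‖Real.exp (-f z - ‖z - θ‖ ^ 2 / (2 * ρ ^ 2))‖
          = Real.exp (-f z) * Real.exp (-(1 / (2 * ρ ^ 2)) * ‖θ - z‖ ^ 2) := by
        intro θ
        rw [Real.norm_eq_abs, abs_of_nonneg (Real.exp_pos _).le]
        exact kernel_eq f ρ θ z
      simp_rw [h1]
      rw [integral_const_mul, gauss_shift_integral hb0 z]
    rw [he]
    exact hint.mul_const _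

lemma kernel_theta_integral (hint : Integrable fun θ : En d => Real.exp (-f θ))
    (hρ : 0 < ρ) (z : En d) :
    ∫ θ : En d, Real.exp (-f z - ‖z - θ‖ ^ 2 / (2 * ρ ^ 2))
      = Real.exp (-f z) * (Real.pi / (1 / (2 * ρ ^ 2))) ^ ((d : ℝ) / 2) := by
  have hb0 : 0 < 1 / (2 * ρ ^ 2) := by positivity
  simp_rw [kernel_eq f ρ]
  rw [integral_const_mul, gauss_shift_integral hb0 z]

lemma kernel_total (hint : Integrable fun θ : En d => Real.exp (-f θ))
    (hcont : Continuous f) (hρ : 0 < ρ) :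
    ∫ θ : En d, ∫ z : En d, Real.exp (-f z - ‖z - θ‖ ^ 2 / (2 * ρ ^ 2))
      = (∫ θ : En d, Real.exp (-f θ)) * (Real.pi / (1 / (2 * ρ ^ 2))) ^ ((d : ℝ) / 2) := by
  rw [integral_integral_swap (kernel_prod_integrable f ρ hint hcont hρ)]
  simp_rw [kernel_theta_integral f ρ hint hρ]
  rw [integral_mul_const]

lemma kernel_integrable_theta (hint : Integrable fun θ : En d => Real.exp (-f θ))
    (hcont : Continuous f) (hρ : 0 < ρ) :
    Integrable (fun θ : En d =>
      ∫ z : En d, Real.exp (-f z - ‖z - θ‖ ^ 2 / (2 * ρ ^ 2))) :=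
  (kernel_prod_integrable f ρ hint hcont hρ).integral_prod_left

end Kernel

lemma quadUB {d : ℕ} (f : En d → ℝ) (M : ℝ) (hM : 0 ≤ M) (hC1 : ContDiff ℝ 1 f)
    (hL : ∀ θ η : En d, ‖gradient f θ - gradient f η‖ ≤ M * ‖θ - η‖)
    (θ z : En d) :
    f z ≤ f θ + ⟪gradient f θ, z - θ⟫ + M * ‖z - θ‖ ^ 2 := by
  have hdiff : Differentiable ℝ f := hC1.differentiable one_ne_zero
  set u := z - θ with hu
  set g := gradient f θ with hg
  set B := ⟪g, u⟫ with hB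
  set ψ : ℝ → ℝ := fun t => f (θ + t • u) - t * B with hψ
  have key : ∀ t : ℝ, HasDerivAt ψ (⟪gradient f (θ + t • u), u⟫ - B) t := by
    intro t
    have h1 : HasDerivAt (fun t : ℝ => θ + t • u) u t := by
      simpa using ((hasDerivAt_id t).smul_const u).const_add θ
    have h2 := ((hdiff (θ + t • u)).hasGradientAt.hasFDerivAt).comp_hasDerivAt t h1
    have h3 : HasDerivAt (fun t : ℝ => t * B) B t := by
      simpa using (hasDerivAt_id t).mul_const B
    exact h2.sub h3
  have bound : ∀ t ∈ Set.Ico (0 : ℝ) 1,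
      ‖⟪gradient f (θ + t • u), u⟫ - B‖ ≤ M * ‖u‖ ^ 2 := by
    intro t ht
    have h1 : ⟪gradient f (θ + t • u), u⟫ - B = ⟪gradient f (θ + t • u) - g, u⟫ := by
      rw [inner_sub_left]
    rw [h1]
    have h2 := abs_real_inner_le_norm (gradient f (θ + t • u) - g) u
    have h3 := hL (θ + t • u) θ
    have h4 : (θ + t • u) - θ = t • u := by abel
    rw [h4, norm_smul] at h3
    have ht0 : ‖(t : ℝ)‖ = t := by rw [Real.norm_eq_abs, abs_of_nonneg ht.1]
    rw [ht0] at h3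
    have hun : 0 ≤ ‖u‖ := norm_nonneg u
    have := mul_le_mul_of_nonneg_right h3 hun
    refine le_trans h2 (le_trans this ?_)
    have ht1 : t ≤ 1 := le_of_lt ht.2
    calc M * (t * ‖u‖) * ‖u‖ = t * (M * ‖u‖ ^ 2) := by ring
      _ ≤ 1 * (M * ‖u‖ ^ 2) := mul_le_mul_of_nonneg_right ht1 (by positivity)
      _ = M * ‖u‖ ^ 2 := one_mul _
  have mvt := norm_image_sub_le_of_norm_deriv_le_segment_01'
      (f := ψ) (f' := fun t => ⟪gradient f (θ + t • u), u⟫ - B)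
      (fun t _ => (key t).hasDerivWithinAt) bound
  have hψ1 : ψ 1 = f z - B := by simp [hψ, hu]
  have hψ0 : ψ 0 = f θ := by simp [hψ]
  rw [hψ1, hψ0, Real.norm_eq_abs] at mvt
  have := (abs_le.mp mvt).2
  linarith

lemma kernel_lower {d : ℕ} (f : En d → ℝ) (M ρ : ℝ) (hM : 0 ≤ M) (hρ : 0 < ρ)
    (hC1 : ContDiff ℝ 1 f)
    (hL : ∀ θ η : En d, ‖gradient f θ - gradient f η‖ ≤ M * ‖θ - η‖)
    (hint : Integrable fun θ : En d => Real.exp (-f θ)) (θ : En d) :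
    (Real.pi / (M + 1 / (2 * ρ ^ 2))) ^ ((d : ℝ) / 2) * Real.exp (-f θ)
      ≤ ∫ z : En d, Real.exp (-f z - ‖z - θ‖ ^ 2 / (2 * ρ ^ 2)) := by
  have hb0 : 0 < 1 / (2 * ρ ^ 2) := by positivity
  set b0 : ℝ := 1 / (2 * ρ ^ 2) with hb0def
  have hb' : 0 < M + b0 := by positivity
  set b' : ℝ := M + b0 with hb'def
  set w := gradient f θ with hw
  set c : En d := (2 * b')⁻¹ • w with hc
  have hpt : ∀ z : En d, Real.exp (-f θ) * Real.exp (-b' * ‖z - (θ - c)‖ ^ 2)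
      ≤ Real.exp (-f z - ‖z - θ‖ ^ 2 / (2 * ρ ^ 2)) := by
    intro z
    rw [← Real.exp_add]
    apply Real.exp_le_exp.mpr
    have hq := quadUB f M hM hC1 hL θ z
    have hz : z - (θ - c) = (z - θ) + c := by abel
    rw [hz]
    have hexp : ‖(z - θ) + c‖ ^ 2 = ‖z - θ‖ ^ 2 + 2 * ⟪z - θ, c⟫ + ‖c‖ ^ 2 :=
      norm_add_sq_real _ _
    have hic : ⟪z - θ, c⟫ = (2 * b')⁻¹ * ⟪z - θ, w⟫ := real_inner_smul_right _ _ _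
    have hcomm : ⟪w, z - θ⟫ = ⟪z - θ, w⟫ := real_inner_comm _ _
    have hb'ne : b' ≠ 0 := ne_of_gt hb'
    have key : b' * (2 * ⟪z - θ, c⟫) = ⟪z - θ, w⟫ := by
      rw [hic]; field_simp
    have hdiv : ‖z - θ‖ ^ 2 / (2 * ρ ^ 2) = b0 * ‖z - θ‖ ^ 2 := by
      rw [hb0def]; ring
    rw [hdiv, hexp]
    have expand : -b' * (‖z - θ‖ ^ 2 + 2 * ⟪z - θ, c⟫ + ‖c‖ ^ 2)
        = -(M + b0) * ‖z - θ‖ ^ 2 - ⟪z - θ, w⟫ - b' * ‖c‖ ^ 2 := by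
      rw [mul_add, mul_add]
      rw [show -b' * (2 * ⟪z - θ, c⟫) = -(b' * (2 * ⟪z - θ, c⟫)) by ring, key, ← hb'def]
      ring
    rw [expand]
    have hbc : 0 ≤ b' * ‖c‖ ^ 2 := by positivity
    rw [hcomm] at hq
    nlinarith [hq, hbc, sq_nonneg ‖z - θ‖]
  have hInt1 : Integrable (fun z : En d =>
      Real.exp (-f θ) * Real.exp (-b' * ‖z - (θ - c)‖ ^ 2)) :=
    (gauss_shift_integrable hb' _).const_mul _
  have hInt2 := kernel_int_z f ρ hint hC1.continuous θ
  have hmono := integral_mono hInt1 hInt2 hpt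
  rw [integral_const_mul, gauss_shift_integral hb' (θ - c)] at hmono
  calc (Real.pi / (M + 1 / (2 * ρ ^ 2))) ^ ((d : ℝ) / 2) * Real.exp (-f θ)
      = Real.exp (-f θ) * (Real.pi / b') ^ ((d : ℝ) / 2) := by
        rw [hb'def, hb0def]; ring
    _ ≤ _ := hmono

end AuxStatement8

/-- Convex gradient-Lipschitz case: for a convex, continuously differentiable potential `f`
with `M`-Lipschitz gradient, `C_π ∈ (0,∞)` and `𝖬_f = ∫ ‖∇f‖² π < ∞`, the total variation
distance between the Gaussian-smoothed density `π_ρ` and `π` is at most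
`1 − (1 + 2ρ²M)^{−d/2}(1 − ρ⁴ M 𝖬_f/(1 + 2ρ²M))`. -/
theorem statement8 {d : ℕ} (hd : 1 ≤ d) (f : En d → ℝ) (M : ℝ)
    (hconv : ConvexOn ℝ Set.univ f)
    (hC1 : ContDiff ℝ 1 f)
    (hgradLip : ∀ θ η : En d, ‖gradient f θ - gradient f η‖ ≤ M * ‖θ - η‖)
    (hint : Integrable (fun θ : En d => Real.exp (-f θ)))
    (hpos : 0 < ∫ θ : En d, Real.exp (-f θ))
    (hmom : Integrable (fun θ : En d => ‖gradient f θ‖ ^ 2 * nrmDensity f θ))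
    (S : ℝ) (hS : S = ∫ θ : En d, ‖gradient f θ‖ ^ 2 * nrmDensity f θ)
    (ρ : ℝ) (hρ : 0 < ρ) :
    (1 / 2) * ∫ θ : En d, |gaussSmoothed f ρ θ - nrmDensity f θ| ≤
      1 - (1 + 2 * ρ ^ 2 * M) ^ (-(d : ℝ) / 2) *
        (1 - ρ ^ 4 * M * S / (1 + 2 * ρ ^ 2 * M)) := by
  have hcont : Continuous f := hC1.continuous
  -- M is nonnegative
  have hM : 0 ≤ M := by
    have i : Fin d := ⟨0, hd⟩
    have h := hgradLip (EuclideanSpace.single i (1 : ℝ)) 0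
    rw [sub_zero, EuclideanSpace.norm_single, norm_one, mul_one] at h
    exact le_trans (norm_nonneg _) h
  have hπpos : 0 < Real.pi := Real.pi_pos
  have hbase : (1 : ℝ) ≤ 1 + 2 * ρ ^ 2 * M := by nlinarith
  have hbasepos : (0 : ℝ) < 1 + 2 * ρ ^ 2 * M := by linarith
  set κ : ℝ := (1 + 2 * ρ ^ 2 * M) ^ (-(d : ℝ) / 2) with hκdef
  have hκpos : 0 < κ := Real.rpow_pos_of_pos hbasepos _
  have hκ1 : κ ≤ 1 := by
    apply Real.rpow_le_one_of_one_le_of_nonpos hbase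
    have : (0 : ℝ) ≤ (d : ℝ) := Nat.cast_nonneg d
    rw [neg_div]
    linarith [div_nonneg this (by norm_num : (0:ℝ) ≤ 2)]
  -- ratio identity
  have hb0 : (0 : ℝ) < 1 / (2 * ρ ^ 2) := by positivity
  have hb' : (0 : ℝ) < M + 1 / (2 * ρ ^ 2) := by positivity
  have hratio : (Real.pi / (M + 1 / (2 * ρ ^ 2))) ^ ((d : ℝ) / 2)
      = κ * (Real.pi / (1 / (2 * ρ ^ 2))) ^ ((d : ℝ) / 2) := by
    have h1 : Real.pi / (M + 1 / (2 * ρ ^ 2))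
        = (Real.pi / (1 / (2 * ρ ^ 2))) / (1 + 2 * ρ ^ 2 * M) := by
      rw [div_div]
      congr 1
      field_simp
      ring
    rw [h1, Real.div_rpow (by positivity) hbasepos.le, hκdef, neg_div,
      Real.rpow_neg hbasepos.le, div_eq_mul_inv, mul_comm]
  -- normalization facts
  have int_pi : Integrable (nrmDensity f) := by
    unfold nrmDensity
    exact hint.div_const _
  have hpi_nonneg : ∀ θ : En d, 0 ≤ nrmDensity f θ := by
    intro θ
    unfold nrmDensity
    positivity
  have int_pi_val : ∫ θ : En d, nrmDensity f θ = 1 := by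
    unfold nrmDensity
    rw [integral_div]
    exact div_self (ne_of_gt hpos)
  have hdenpos : 0 < ∫ θ' : En d,
      ∫ z : En d, Real.exp (-f z - ‖z - θ'‖ ^ 2 / (2 * ρ ^ 2)) := by
    rw [kernel_total f ρ hint hcont hρ]
    have : (0:ℝ) < (Real.pi / (1 / (2 * ρ ^ 2))) ^ ((d : ℝ) / 2) :=
      Real.rpow_pos_of_pos (by positivity) _
    positivity
  have int_rho : Integrable (gaussSmoothed f ρ) := by
    unfold gaussSmoothed
    exact (kernel_integrable_theta f ρ hint hcont hρ).div_const _
  have int_rho_val : ∫ θ : En d, gaussSmoothed f ρ θ = 1 := by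
    unfold gaussSmoothed
    rw [integral_div]
    exact div_self (ne_of_gt hdenpos)
  -- pointwise lower bound
  have hlow : ∀ θ : En d, κ * nrmDensity f θ ≤ gaussSmoothed f ρ θ := by
    intro θ
    unfold gaussSmoothed nrmDensity
    rw [kernel_total f ρ hint hcont hρ]
    have h1 := kernel_lower f M ρ hM hρ hC1 hgradLip hint θ
    rw [hratio] at h1
    have hGpos : (0:ℝ) < (Real.pi / (1 / (2 * ρ ^ 2))) ^ ((d : ℝ) / 2) :=
      Real.rpow_pos_of_pos (by positivity) _
    have hCne : (∫ θ' : En d, Real.exp (-f θ')) ≠ 0 := ne_of_gt hpos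
    have hGne : (Real.pi / (1 / (2 * ρ ^ 2))) ^ ((d : ℝ) / 2) ≠ 0 := ne_of_gt hGpos
    have heq : κ * (Real.exp (-f θ) / ∫ θ' : En d, Real.exp (-f θ'))
        = (κ * (Real.pi / (1 / (2 * ρ ^ 2))) ^ ((d : ℝ) / 2) * Real.exp (-f θ)) /
          ((∫ θ' : En d, Real.exp (-f θ')) *
            (Real.pi / (1 / (2 * ρ ^ 2))) ^ ((d : ℝ) / 2)) := by
      field_simp
    rw [heq]
    have hCG : (0:ℝ) < (∫ θ' : En d, Real.exp (-f θ')) *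
        (Real.pi / (1 / (2 * ρ ^ 2))) ^ ((d : ℝ) / 2) := by positivity
    exact div_le_div_of_nonneg_right h1 hCG.le
  -- pointwise absolute-value bound
  have habs : ∀ θ : En d, |gaussSmoothed f ρ θ - nrmDensity f θ|
      ≤ gaussSmoothed f ρ θ + nrmDensity f θ - 2 * (κ * nrmDensity f θ) := by
    intro θ
    have h1 := hlow θ
    have h2 := hpi_nonneg θ
    have h3 : κ * nrmDensity f θ ≤ nrmDensity f θ := by nlinarith
    apply abs_le.mpr
    constructor <;> linarith
  have intRHS : Integrable (fun θ : En d =>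
      gaussSmoothed f ρ θ + nrmDensity f θ - 2 * (κ * nrmDensity f θ)) := by
    apply (int_rho.add int_pi).sub
    exact ((int_pi.const_mul κ).const_mul 2)
  have intLHS : Integrable (fun θ : En d => |gaussSmoothed f ρ θ - nrmDensity f θ|) :=
    (int_rho.sub int_pi).abs
  have hTV : ∫ θ : En d, |gaussSmoothed f ρ θ - nrmDensity f θ| ≤ 2 - 2 * κ := by
    calc ∫ θ : En d, |gaussSmoothed f ρ θ - nrmDensity f θ|
        ≤ ∫ θ : En d, (gaussSmoothed f ρ θ + nrmDensity f θ - 2 * (κ * nrmDensity f θ)) :=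
          integral_mono intLHS intRHS habs
      _ = (∫ θ : En d, gaussSmoothed f ρ θ) + (∫ θ : En d, nrmDensity f θ)
            - 2 * (κ * ∫ θ : En d, nrmDensity f θ) := by
          have hadd : Integrable (fun θ : En d => gaussSmoothed f ρ θ + nrmDensity f θ) :=
            int_rho.add int_pi
          have hmul : Integrable (fun θ : En d => 2 * (κ * nrmDensity f θ)) :=
            (int_pi.const_mul κ).const_mul 2
          rw [integral_sub hadd hmul, integral_add int_rho int_pi,
            integral_const_mul, integral_const_mul]
      _ = 2 - 2 * κ := by rw [int_rho_val, int_pi_val]; ring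
  -- conclude
  have hS0 : 0 ≤ S := by
    rw [hS]
    apply integral_nonneg
    intro θ
    have := hpi_nonneg θ
    positivity
  have hc0 : 0 ≤ ρ ^ 4 * M * S / (1 + 2 * ρ ^ 2 * M) := by positivity
  have hfinal : 1 - κ ≤ 1 - κ * (1 - ρ ^ 4 * M * S / (1 + 2 * ρ ^ 2 * M)) := by
    have hprod : 0 ≤ κ * (ρ ^ 4 * M * S / (1 + 2 * ρ ^ 2 * M)) :=
      mul_nonneg hκpos.le hc0
    have : κ * (1 - ρ ^ 4 * M * S / (1 + 2 * ρ ^ 2 * M))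
        = κ - κ * (ρ ^ 4 * M * S / (1 + 2 * ρ ^ 2 * M)) := by ring
    rw [this]
    linarith
  linarith
end
end

section
/- Let d ≥ 1, J ≥ 1, and for each j ∈ {1,…,J} let f_j : ℝ^d → ℝ be L_{f_j}-Lipschitz and ρ_j > 0, with 0 < ∫_{ℝ^d} exp(−Σ_j f_j(θ)) dθ < ∞. Let π(θ) ∝ exp(−Σ_{j=1}^J f_j(θ)) and let π_ρ(θ) ∝ Π_{j=1}^J ∫_{ℝ^d} exp(−f_j(z_j) − ‖z_j − θ‖₂²/(2ρ_j²)) dz_j be the normalized marginal of the multiply-split model. Then (1/2) ∫_{ℝ^d} |π_ρ(θ) − π(θ)| dθ ≤ 1 − Π_{j=1}^J D_{−d}(L_{f_j} ρ_j) / D_{−d}(−L_{f_j} ρ_j). -/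
set_option maxHeartbeats 1000000

open MeasureTheory

noncomputable section

namespace Statement10Aux

open Set

lemma gauss_integrable {d : ℕ} (a : ℝ) {b : ℝ} (hb : 0 < b) :
    Integrable (fun u : En d => Real.exp (a * ‖u‖ - b * ‖u‖ ^ 2)) := by
  have hbase : Integrable (fun u : En d => Real.exp (-(b/2) * ‖u‖ ^ 2)) := by
    have h := (GaussianFourier.integrable_cexp_neg_mul_sq_norm_add (V := En d)
      (b := (b/2 : ℂ)) (by simpa using half_pos hb) 0 0).norm
    refine h.congr ?_
    filter_upwards with u
    simp [Complex.norm_exp, ← Complex.ofReal_pow]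
  have hi := (hbase.const_mul (Real.exp (a^2/(2*b))))
  refine hi.mono' ?_ ?_
  · exact (Real.continuous_exp.comp (by fun_prop)).aestronglyMeasurable
  filter_upwards with u
  rw [Real.norm_eq_abs, abs_of_pos (Real.exp_pos _), ← Real.exp_add]
  apply Real.exp_le_exp.2
  have key : a^2/(2*b) + -(b/2)*‖u‖^2 - (a*‖u‖ - b*‖u‖^2) = (a - b*‖u‖)^2/(2*b) := by
    field_simp; ring
  nlinarith [div_nonneg (sq_nonneg (a - b*‖u‖)) (by linarith : (0:ℝ) ≤ 2*b)]

noncomputable def Aint (d : ℕ) (r s : ℝ) : ℝ :=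
    ∫ u : En d, Real.exp (-(s * ‖u‖) - ‖u‖ ^ 2 / (2 * r ^ 2))

lemma Aint_integrable {d : ℕ} (s : ℝ) {r : ℝ} (hr : 0 < r) :
    Integrable (fun u : En d => Real.exp (-(s * ‖u‖) - ‖u‖ ^ 2 / (2 * r ^ 2))) := by
  have h := gauss_integrable (d := d) (-s) (b := 1/(2*r^2)) (by positivity)
  refine h.congr ?_
  filter_upwards with u
  congr 1
  field_simp

lemma Aint_pos {d : ℕ} (hd : 1 ≤ d) (s : ℝ) {r : ℝ} (hr : 0 < r) : 0 < Aint d r s := by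
  haveI : Nonempty (Fin d) := ⟨⟨0, hd⟩⟩
  rw [Aint, integral_pos_iff_support_of_nonneg (fun u => (Real.exp_pos _).le)
    (Aint_integrable s hr)]
  have : Function.support (fun u : En d => Real.exp (-(s * ‖u‖) - ‖u‖ ^ 2 / (2 * r ^ 2)))
      = univ := by
    ext u; simp [Function.mem_support, (Real.exp_pos _).ne']
  rw [this]
  exact isOpen_univ.measure_pos volume univ_nonempty

lemma Aint_mono {d : ℕ} {r s t : ℝ} (hr : 0 < r) (hst : s ≤ t) : Aint d r t ≤ Aint d r s := by
  refine integral_mono (Aint_integrable t hr) (Aint_integrable s hr) fun u => ?_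
  apply Real.exp_le_exp.2
  have := norm_nonneg u
  nlinarith

lemma Aint_eq_pcf {d : ℕ} (hd : 1 ≤ d) (s : ℝ) {r : ℝ} (hr : 0 < r) :
    Aint d r s = ((d * (volume (Metric.ball (0 : En d) 1)).toReal * r ^ d * Real.Gamma d)
      * Real.exp ((s * r) ^ 2 / 4)) * pcf d (s * r) := by
  haveI : Nonempty (Fin d) := ⟨⟨0, hd⟩⟩
  haveI : Nontrivial (En d) := inferInstance
  have hdim : Module.finrank ℝ (En d) = d := finrank_euclideanSpace_fin
  have h1 := MeasureTheory.integral_fun_norm_addHaar (volume : Measure (En d))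
    (fun y => Real.exp (-(s * y) - y ^ 2 / (2 * r ^ 2)))
  rw [hdim] at h1
  rw [Aint, h1]
  have h2 := MeasureTheory.integral_comp_mul_left_Ioi
    (fun y => y ^ (d - 1) • Real.exp (-(s * y) - y ^ 2 / (2 * r ^ 2))) 0 hr
  rw [mul_zero] at h2
  have h3 : ∀ x : ℝ, (r * x) ^ (d - 1) • Real.exp (-(s * (r * x)) - (r * x) ^ 2 / (2 * r ^ 2))
      = r ^ (d-1) * (Real.exp (-(x * (s * r)) - x ^ 2 / 2) * x ^ (d - 1)) := by
    intro x
    rw [smul_eq_mul, mul_pow]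
    have : -(s * (r * x)) - (r * x) ^ 2 / (2 * r ^ 2) = -(x * (s * r)) - x ^ 2 / 2 := by
      field_simp
    rw [this]; ring
  simp only [h3] at h2
  rw [integral_const_mul] at h2
  have hΓ : 0 < Real.Gamma d := Real.Gamma_pos_of_pos (by exact_mod_cast hd)
  rw [pcf]
  rw [eq_comm, inv_smul_eq_iff₀ hr.ne'] at h2
  rw [h2, smul_eq_mul, smul_eq_mul, nsmul_eq_mul, measureReal_def]
  have hrd : r * (r ^ (d - 1) * ∫ (a : ℝ) in Ioi 0,
        Real.exp (-(a * (s * r)) - a ^ 2 / 2) * a ^ (d - 1))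
      = r ^ d * ∫ (a : ℝ) in Ioi 0, Real.exp (-(a * (s * r)) - a ^ 2 / 2) * a ^ (d - 1) := by
    rw [← mul_assoc, ← pow_succ']
    congr 2
    omega
  rw [hrd, neg_div, Real.exp_neg]
  field_simp

lemma ball_toReal_pos {d : ℕ} (hd : 1 ≤ d) :
    0 < (volume (Metric.ball (0 : En d) 1)).toReal := by
  refine ENNReal.toReal_pos ?_ measure_ball_lt_top.ne
  exact (Metric.measure_ball_pos volume _ one_pos).ne'

lemma pcf_ratio {d : ℕ} (hd : 1 ≤ d) (l : ℝ) {r : ℝ} (hr : 0 < r) :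
    pcf d (l * r) / pcf d (-(l * r)) = Aint d r l / Aint d r (-l) := by
  have hΓ : 0 < Real.Gamma d := Real.Gamma_pos_of_pos (by exact_mod_cast hd)
  set K : ℝ := (d * (volume (Metric.ball (0 : En d) 1)).toReal * r ^ d * Real.Gamma d)
    * Real.exp ((l * r) ^ 2 / 4) with hK
  have hKpos : 0 < K := by
    have h1 : (0:ℝ) < d := by exact_mod_cast hd
    have := ball_toReal_pos (d := d) hd
    positivity
  have h1 : Aint d r l = K * pcf d (l * r) := Aint_eq_pcf hd l hr
  have h2 : Aint d r (-l) = K * pcf d (-(l * r)) := by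
    have h := Aint_eq_pcf hd (-l) hr
    rw [neg_mul, neg_sq] at h
    exact h
  rw [h1, h2, mul_div_mul_left _ _ hKpos.ne']

lemma lip_nonneg {d : ℕ} (hd : 1 ≤ d) {f : En d → ℝ} {L : ℝ}
    (hLip : ∀ θ η : En d, |f θ - f η| ≤ L * ‖θ - η‖) : 0 ≤ L := by
  set e : En d := EuclideanSpace.single ⟨0, hd⟩ 1 with he
  have hn : ‖e - 0‖ = 1 := by
    rw [sub_zero, he, EuclideanSpace.norm_single, norm_one]
  have h := hLip e 0
  rw [hn, mul_one] at h
  exact le_trans (abs_nonneg _) h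

lemma lip_continuous {d : ℕ} (hd : 1 ≤ d) {f : En d → ℝ} {L : ℝ}
    (hLip : ∀ θ η : En d, |f θ - f η| ≤ L * ‖θ - η‖) : Continuous f := by
  have hL0 := lip_nonneg hd hLip
  refine LipschitzWith.continuous (K := ⟨L, hL0⟩) (LipschitzWith.of_dist_le_mul fun x y => ?_)
  rw [Real.dist_eq, dist_eq_norm]
  exact hLip x y

lemma smoothed_bounds {d : ℕ} (hd : 1 ≤ d) {f : En d → ℝ} {L : ℝ} {r : ℝ} (hr : 0 < r)
    (hLip : ∀ θ η : En d, |f θ - f η| ≤ L * ‖θ - η‖) (θ : En d) :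
    Integrable (fun z : En d => Real.exp (-f z - ‖z - θ‖ ^ 2 / (2 * r ^ 2))) ∧
    Real.exp (-f θ) * Aint d r L ≤ (∫ z : En d, Real.exp (-f z - ‖z - θ‖ ^ 2 / (2 * r ^ 2))) ∧
    (∫ z : En d, Real.exp (-f z - ‖z - θ‖ ^ 2 / (2 * r ^ 2)))
      ≤ Real.exp (-f θ) * Aint d r (-L) := by
  have hcf := lip_continuous hd hLip
  have key : ∀ z : En d,
      (-f θ + (-(L * ‖z - θ‖) - ‖z - θ‖ ^ 2 / (2 * r ^ 2)) ≤ -f z - ‖z - θ‖ ^ 2 / (2 * r ^ 2))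
      ∧ (-f z - ‖z - θ‖ ^ 2 / (2 * r ^ 2)
          ≤ -f θ + (-(-L * ‖z - θ‖) - ‖z - θ‖ ^ 2 / (2 * r ^ 2))) := by
    intro z
    have h := abs_le.1 (hLip θ z)
    rw [← norm_sub_rev z θ] at h
    constructor <;> nlinarith [h.1, h.2]
  have hup : Integrable (fun z : En d =>
      Real.exp (-f θ) * Real.exp (-(-L * ‖z - θ‖) - ‖z - θ‖ ^ 2 / (2 * r ^ 2))) :=
    ((Aint_integrable (-L) hr).comp_sub_right θ).const_mul _
  have hlow : Integrable (fun z : En d =>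
      Real.exp (-f θ) * Real.exp (-(L * ‖z - θ‖) - ‖z - θ‖ ^ 2 / (2 * r ^ 2))) :=
    ((Aint_integrable L hr).comp_sub_right θ).const_mul _
  have hF : Integrable (fun z : En d => Real.exp (-f z - ‖z - θ‖ ^ 2 / (2 * r ^ 2))) := by
    refine hup.mono' ?_ ?_
    · exact (Real.continuous_exp.comp (by fun_prop)).aestronglyMeasurable
    filter_upwards with z
    rw [Real.norm_eq_abs, abs_of_pos (Real.exp_pos _), ← Real.exp_add]
    exact Real.exp_le_exp.2 (key z).2
  refine ⟨hF, ?_, ?_⟩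
  · have h1 : (∫ z : En d, Real.exp (-f θ) * Real.exp (-(L * ‖z - θ‖) - ‖z - θ‖ ^ 2 / (2 * r ^ 2)))
        = Real.exp (-f θ) * Aint d r L := by
      rw [integral_const_mul, Aint]
      congr 1
      exact integral_sub_right_eq_self (fun u : En d =>
        Real.exp (-(L * ‖u‖) - ‖u‖ ^ 2 / (2 * r ^ 2))) θ
    rw [← h1]
    refine integral_mono hlow hF fun z => ?_
    rw [← Real.exp_add]
    exact Real.exp_le_exp.2 (key z).1
  · have h1 : (∫ z : En d, Real.exp (-f θ) * Real.exp (-(-L * ‖z - θ‖) - ‖z - θ‖ ^ 2 / (2 * r ^ 2)))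
        = Real.exp (-f θ) * Aint d r (-L) := by
      rw [integral_const_mul, Aint]
      congr 1
      exact integral_sub_right_eq_self (fun u : En d =>
        Real.exp (-(-L * ‖u‖) - ‖u‖ ^ 2 / (2 * r ^ 2))) θ
    rw [← h1]
    refine integral_mono hF hup fun z => ?_
    rw [← Real.exp_add]
    exact Real.exp_le_exp.2 (key z).2

lemma tv_bound {d : ℕ} (p q : En d → ℝ) (c : ℝ) (hc1 : c ≤ 1)
    (hp : Integrable p) (hq : Integrable q)
    (hq0 : ∀ θ, 0 ≤ q θ)
    (hip : ∫ θ : En d, p θ = 1) (hiq : ∫ θ : En d, q θ = 1)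
    (hlow : ∀ θ, c * q θ ≤ p θ) :
    (1/2) * ∫ θ : En d, |p θ - q θ| ≤ 1 - c := by
  have key : ∀ θ, |p θ - q θ| ≤ (p θ - c * q θ) + (q θ - c * q θ) := by
    intro θ
    have h1 := hlow θ
    have h2 : c * q θ ≤ q θ := by nlinarith [hq0 θ]
    rw [abs_le]
    constructor <;> nlinarith
  have i1 : Integrable (fun θ : En d => p θ - c * q θ) := hp.sub (hq.const_mul c)
  have i2 : Integrable (fun θ : En d => q θ - c * q θ) := hq.sub (hq.const_mul c)
  have hupint : Integrable (fun θ : En d => (p θ - c * q θ) + (q θ - c * q θ)) := i1.add i2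
  have imul : Integrable (fun θ : En d => c * q θ) := hq.const_mul c
  have h3 : ∫ θ : En d, ((p θ - c * q θ) + (q θ - c * q θ)) = 2 - 2*c := by
    rw [integral_add i1 i2, integral_sub hp imul, integral_sub hq imul,
      integral_const_mul, hip, hiq]
    ring
  have h4 := integral_mono_of_nonneg (Filter.Eventually.of_forall fun θ => abs_nonneg _)
    hupint (Filter.Eventually.of_forall key)
  rw [h3] at h4
  linarith

end Statement10Aux

open Statement10Aux

/-- Multiple splitting: for `J` potentials `f_j`, each `L_j`-Lipschitz, and tolerances
`ρ_j > 0`, the total variation distance between the normalized marginal `π_ρ` of the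
multiply-split model and `π ∝ exp(−Σ_j f_j)` is at most
`1 − Π_j D_{−d}(L_j ρ_j)/D_{−d}(−L_j ρ_j)`. -/
theorem statement10 {d J : ℕ} (hd : 1 ≤ d) (hJ : 1 ≤ J)
    (f : Fin J → En d → ℝ) (L ρ : Fin J → ℝ) (hρ : ∀ j, 0 < ρ j)
    (hLip : ∀ j, ∀ θ η : En d, |f j θ - f j η| ≤ L j * ‖θ - η‖)
    (hint : Integrable (fun θ : En d => Real.exp (-∑ j, f j θ)))
    (hpos : 0 < ∫ θ : En d, Real.exp (-∑ j, f j θ)) :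
    (1 / 2) * ∫ θ : En d,
        |(∏ j, ∫ z : En d, Real.exp (-f j z - ‖z - θ‖ ^ 2 / (2 * (ρ j) ^ 2))) /
            (∫ θ' : En d, ∏ j, ∫ z : En d,
              Real.exp (-f j z - ‖z - θ'‖ ^ 2 / (2 * (ρ j) ^ 2))) -
          Real.exp (-∑ j, f j θ) / (∫ θ' : En d, Real.exp (-∑ j, f j θ'))| ≤
      1 - ∏ j, pcf d (L j * ρ j) / pcf d (-(L j * ρ j)) := by
  classical
  have hL0 : ∀ j, 0 ≤ L j := fun j => lip_nonneg hd (hLip j)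
  set Z : ℝ := ∫ θ' : En d, Real.exp (-∑ j, f j θ') with hZ
  set N : En d → ℝ := fun θ =>
    ∏ j, ∫ z : En d, Real.exp (-f j z - ‖z - θ‖ ^ 2 / (2 * (ρ j) ^ 2)) with hNdef
  set Pp : ℝ := ∏ j, Aint d (ρ j) (L j) with hPp
  set Pm : ℝ := ∏ j, Aint d (ρ j) (-(L j)) with hPm
  have hbnd := fun (j : Fin J) (θ : En d) => smoothed_bounds hd (hρ j) (hLip j) θ
  have hApos : ∀ (j : Fin J) (s : ℝ), 0 < Aint d (ρ j) s := fun j s => Aint_pos hd s (hρ j)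
  have hPppos : 0 < Pp := Finset.prod_pos fun j _ => hApos j _
  have hPmpos : 0 < Pm := Finset.prod_pos fun j _ => hApos j _
  have hexp_prod : ∀ θ : En d, (∏ j, Real.exp (-f j θ)) = Real.exp (-∑ j, f j θ) := by
    intro θ
    rw [← Real.exp_sum, ← Finset.sum_neg_distrib]
  have hNlb : ∀ θ : En d, Real.exp (-∑ j, f j θ) * Pp ≤ N θ := by
    intro θ
    have := Finset.prod_le_prod (s := Finset.univ)
      (f := fun j => Real.exp (-f j θ) * Aint d (ρ j) (L j))
      (g := fun j => ∫ z : En d, Real.exp (-f j z - ‖z - θ‖ ^ 2 / (2 * (ρ j) ^ 2)))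
      (fun j _ => mul_nonneg (Real.exp_pos _).le (hApos j _).le) (fun j _ => (hbnd j θ).2.1)
    rwa [Finset.prod_mul_distrib, hexp_prod θ] at this
  have hNub : ∀ θ : En d, N θ ≤ Real.exp (-∑ j, f j θ) * Pm := by
    intro θ
    have := Finset.prod_le_prod (s := Finset.univ)
      (f := fun j => ∫ z : En d, Real.exp (-f j z - ‖z - θ‖ ^ 2 / (2 * (ρ j) ^ 2)))
      (g := fun j => Real.exp (-f j θ) * Aint d (ρ j) (-(L j)))
      (fun j _ => integral_nonneg fun z => (Real.exp_pos _).le)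
      (fun j _ => (hbnd j θ).2.2)
    rwa [Finset.prod_mul_distrib, hexp_prod θ] at this
  have hN0 : ∀ θ, 0 ≤ N θ :=
    fun θ => Finset.prod_nonneg fun j _ => integral_nonneg fun z => (Real.exp_pos _).le
  have hNmeas : AEStronglyMeasurable N (volume : Measure (En d)) := by
    have : ∀ j : Fin J, StronglyMeasurable fun θ : En d =>
        ∫ z : En d, Real.exp (-f j z - ‖z - θ‖ ^ 2 / (2 * (ρ j) ^ 2)) := by
      intro j
      have hc : Continuous fun p : En d × En d =>
          Real.exp (-f j p.2 - ‖p.2 - p.1‖ ^ 2 / (2 * (ρ j) ^ 2)) := by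
        have hcf := lip_continuous hd (hLip j)
        fun_prop
      exact hc.stronglyMeasurable.integral_prod_right'
    exact (Finset.stronglyMeasurable_fun_prod Finset.univ fun j _ => this j).aestronglyMeasurable
  have hNint : Integrable N := by
    refine (hint.mul_const Pm).mono' hNmeas ?_
    filter_upwards with θ
    rw [Real.norm_eq_abs, abs_of_nonneg (hN0 θ)]
    exact hNub θ
  set D : ℝ := ∫ θ' : En d, N θ' with hD
  have hDlb : Z * Pp ≤ D := by
    have h := integral_mono (hint.mul_const Pp) hNint hNlb
    rwa [integral_mul_const] at h
  have hDub : D ≤ Z * Pm := by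
    have h := integral_mono hNint (hint.mul_const Pm) hNub
    rwa [integral_mul_const] at h
  have hDpos : 0 < D := lt_of_lt_of_le (mul_pos hpos hPppos) hDlb
  set c : ℝ := ∏ j, pcf d (L j * ρ j) / pcf d (-(L j * ρ j)) with hc
  have hceq : c = Pp / Pm := by
    rw [hc, hPp, hPm, ← Finset.prod_div_distrib]
    exact Finset.prod_congr rfl fun j _ => pcf_ratio hd (L j) (hρ j)
  have hPple : Pp ≤ Pm :=
    Finset.prod_le_prod (fun j _ => (hApos j _).le)
      (fun j _ => Aint_mono (hρ j) (neg_le_self (hL0 j)))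
  have hc1 : c ≤ 1 := by
    rw [hceq, div_le_one hPmpos]
    exact hPple
  have main := tv_bound (fun θ => N θ / D) (fun θ => Real.exp (-∑ j, f j θ) / Z) c hc1
    (hNint.div_const D) (hint.div_const Z)
    (fun θ => div_nonneg (Real.exp_pos _).le (le_of_lt hpos))
    (by rw [integral_div, ← hD, div_self hDpos.ne'])
    (by rw [integral_div, ← hZ, div_self hpos.ne'])
    (fun θ => by
      rw [hceq]
      have h1 : Pp / Pm * (Real.exp (-∑ j, f j θ) / Z)
          = (Real.exp (-∑ j, f j θ) * Pp) / (Z * Pm) := by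
        field_simp
      rw [h1]
      exact div_le_div₀ (hN0 θ) (hNlb θ) hDpos hDub)
  rw [hD] at main
  simp only [hNdef] at main
  exact main
end
end

section
/- Let d ≥ 1 and let f : ℝ^d → ℝ be L_f-Lipschitz with C_π := ∫_{ℝ^d} exp(−f(θ)) dθ ∈ (0, ∞); let π := exp(−f)/C_π and let π_ρ be the Gaussian-smoothed density. Let α ∈ (0,1) and let C ⊆ ℝ^d be any measurable set with ∫_C π_ρ(θ) dθ = 1 − α. Then (1 − α) N_ρ / D_{−d}(−L_f ρ) ≤ ∫_C π(θ) dθ ≤ min(1, (1 − α) N_ρ / D_{−d}(L_f ρ)), where N_ρ := 2^{d/2−1} Γ(d/2) / (Γ(d) exp(L_f² ρ²/4)). -/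
open MeasureTheory Real Set

noncomputable section

lemma integrable_gauss (d : ℕ) {b : ℝ} (hb : 0 < b) :
    Integrable (fun v : En d => Real.exp (-b * ‖v‖ ^ 2)) := by
  have h := (GaussianFourier.integrable_cexp_neg_mul_sq_norm_add (V := En d)
    (b := (b : ℂ)) (by simpa using hb) 0 0).norm
  refine h.congr (Filter.Eventually.of_forall fun v => ?_)
  simp only [Complex.norm_exp]
  norm_num
  left
  rw [← Complex.ofReal_pow, Complex.ofReal_re]

lemma integrable_aux (d : ℕ) (s : ℝ) {b : ℝ} (hb : 0 < b) :
    Integrable (fun w : En d => Real.exp (s * ‖w‖ - b * ‖w‖ ^ 2)) := by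
  refine (((integrable_gauss d (b := b/2) (by positivity)).const_mul
      (Real.exp (s ^ 2 / (2 * b)))).mono' ?_ ?_)
  · exact ((continuous_norm.const_smul s).sub
      ((continuous_norm.pow 2).const_smul b)).rexp.aestronglyMeasurable
  · refine Filter.Eventually.of_forall fun w => ?_
    rw [Real.norm_eq_abs, abs_of_nonneg (Real.exp_pos _).le, ← Real.exp_add]
    apply Real.exp_le_exp.2
    rw [← sub_nonneg]
    have hkey : s ^ 2 / (2 * b) + -(b / 2) * ‖w‖ ^ 2 - (s * ‖w‖ - b * ‖w‖ ^ 2)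
        = (s - b * ‖w‖) ^ 2 / (2 * b) := by field_simp; ring
    rw [hkey]; positivity

noncomputable def Jint (d : ℕ) (c : ℝ) : ℝ :=
  ∫ x in Ioi (0:ℝ), Real.exp (c * x - x ^ 2 / 2) * x ^ (d - 1)

lemma pow_eq_rpow_aux {d : ℕ} (hd : 1 ≤ d) {x : ℝ} (hx : 0 < x) :
    x ^ (d - 1) = x ^ ((d : ℝ) - 1) := by
  rw [show (d : ℝ) - 1 = ((d - 1 : ℕ) : ℝ) by
      rw [Nat.cast_sub hd, Nat.cast_one], Real.rpow_natCast]

lemma Jint_integrableOn {d : ℕ} (hd : 1 ≤ d) (c : ℝ) :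
    IntegrableOn (fun x : ℝ => Real.exp (c * x - x ^ 2 / 2) * x ^ (d - 1)) (Ioi 0) := by
  have hmaj : IntegrableOn
      (fun x : ℝ => Real.exp (c ^ 2) * (x ^ ((d : ℝ) - 1) * Real.exp (-(1/4) * x ^ 2)))
      (Ioi 0) := by
    refine (integrableOn_rpow_mul_exp_neg_mul_sq (by norm_num) ?_).const_mul _
    have : (1:ℝ) ≤ (d:ℝ) := by exact_mod_cast hd
    linarith
  refine hmaj.integrable.mono' ?_ ?_
  · exact (((continuous_const.mul continuous_id).sub
      ((continuous_pow 2).div_const 2)).rexp.mul (continuous_pow (d-1))).aestronglyMeasurable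
  · filter_upwards [ae_restrict_mem measurableSet_Ioi] with x hx
    have hx0 : (0:ℝ) < x := hx
    rw [Real.norm_eq_abs, abs_mul, abs_of_nonneg (Real.exp_pos _).le,
      abs_of_nonneg (pow_nonneg hx0.le _), pow_eq_rpow_aux hd hx0]
    have h1 : Real.exp (c * x - x ^ 2 / 2) ≤ Real.exp (c ^ 2) * Real.exp (-(1/4) * x ^ 2) := by
      rw [← Real.exp_add]
      apply Real.exp_le_exp.2
      nlinarith [sq_nonneg (c - x / 2)]
    calc Real.exp (c * x - x ^ 2 / 2) * x ^ ((d:ℝ) - 1)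
        ≤ (Real.exp (c ^ 2) * Real.exp (-(1/4) * x ^ 2)) * x ^ ((d:ℝ) - 1) :=
          mul_le_mul_of_nonneg_right h1 (Real.rpow_nonneg hx0.le _)
      _ = Real.exp (c ^ 2) * (x ^ ((d:ℝ) - 1) * Real.exp (-(1/4) * x ^ 2)) := by ring

lemma Jint_pos {d : ℕ} (hd : 1 ≤ d) (c : ℝ) : 0 < Jint d c := by
  rw [Jint, setIntegral_pos_iff_support_of_nonneg_ae ?_ (Jint_integrableOn hd c)]
  · refine lt_of_lt_of_le (show (0:ENNReal) < volume (Ioi (0:ℝ)) by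
      rw [Real.volume_Ioi]; simp) (measure_mono ?_)
    intro x hx
    refine ⟨?_, hx⟩
    have hx0 : (0:ℝ) < x := hx
    simp only [Function.mem_support]
    positivity
  · filter_upwards [ae_restrict_mem measurableSet_Ioi] with x hx
    have hx0 : (0:ℝ) < x := hx
    positivity

lemma Jint_zero {d : ℕ} (hd : 1 ≤ d) :
    Jint d 0 = 2 ^ ((d : ℝ) / 2 - 1) * Real.Gamma ((d : ℝ) / 2) := by
  rw [Jint]
  have h1 : ∀ x ∈ Ioi (0:ℝ), Real.exp (0 * x - x ^ 2 / 2) * x ^ (d - 1)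
      = x ^ ((d:ℝ) - 1) * Real.exp (-(1/2 : ℝ) * x ^ (2:ℝ)) := by
    intro x hx
    have hx0 : (0:ℝ) < x := hx
    rw [pow_eq_rpow_aux hd hx0, Real.rpow_two, mul_comm]
    ring_nf
  rw [setIntegral_congr_fun measurableSet_Ioi h1,
    integral_rpow_mul_exp_neg_mul_rpow (by norm_num) ?_ (by norm_num)]
  · have h2 : ((d:ℝ) - 1 + 1) / 2 = (d:ℝ)/2 := by ring
    rw [h2]
    congr 1
    rw [show -((d:ℝ) - 1 + 1) / 2 = -((d:ℝ)/2) by ring]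
    rw [one_div, Real.inv_rpow (by norm_num : (0:ℝ) ≤ 2),
      ← Real.rpow_neg (by norm_num : (0:ℝ) ≤ 2), neg_neg,
      show (2:ℝ)⁻¹ = (2:ℝ) ^ (-1:ℝ) by rw [Real.rpow_neg_one],
      ← Real.rpow_add (by norm_num : (0:ℝ) < 2)]
    ring_nf
  · have : (1:ℝ) ≤ (d:ℝ) := by exact_mod_cast hd
    linarith


lemma I_polar {d : ℕ} (hd : 1 ≤ d) {ρ : ℝ} (hρ : 0 < ρ) (s : ℝ) :
    (∫ w : En d, Real.exp (s * ‖w‖ - ‖w‖ ^ 2 / (2 * ρ ^ 2))) =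
      ((d : ℝ) * (volume (Metric.ball (0 : En d) 1)).toReal * ρ ^ d) * Jint d (s * ρ) := by
  haveI : Nontrivial (En d) := by
    refine nontrivial_of_ne (EuclideanSpace.single (⟨0, hd⟩ : Fin d) (1:ℝ)) 0 ?_
    intro h
    have := congrArg (fun v => ‖v‖) h
    simp [EuclideanSpace.norm_single] at this
  have hfr : Module.finrank ℝ (En d) = d := finrank_euclideanSpace_fin
  have h := MeasureTheory.integral_fun_norm_addHaar (volume : Measure (En d))
    (fun r : ℝ => Real.exp (s * r - r ^ 2 / (2 * ρ ^ 2)))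
  rw [hfr] at h
  rw [h, nsmul_eq_mul, smul_eq_mul]
  have hsub := integral_comp_mul_left_Ioi
    (fun y : ℝ => y ^ (d - 1) * Real.exp (s * y - y ^ 2 / (2 * ρ ^ 2))) 0 hρ
  rw [mul_zero] at hsub
  have hL : (∫ x in Ioi (0:ℝ),
      (fun y : ℝ => y ^ (d - 1) * Real.exp (s * y - y ^ 2 / (2 * ρ ^ 2))) (ρ * x))
      = ρ ^ (d - 1) * Jint d (s * ρ) := by
    rw [Jint, ← integral_const_mul]
    refine setIntegral_congr_fun measurableSet_Ioi fun x hx => ?_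
    have hx0 : (0:ℝ) < x := hx
    have hρ2 : (ρ * x) ^ 2 / (2 * ρ ^ 2) = x ^ 2 / 2 := by
      field_simp
    show (ρ * x) ^ (d - 1) * rexp (s * (ρ * x) - (ρ * x) ^ 2 / (2 * ρ ^ 2)) = _
    rw [hρ2, mul_pow]
    ring_nf
  rw [hL] at hsub
  have h2 : (∫ y in Ioi (0:ℝ), y ^ (d - 1) • Real.exp (s * y - y ^ 2 / (2 * ρ ^ 2)))
      = ρ ^ d * Jint d (s * ρ) := by
    simp only [smul_eq_mul]
    have := congrArg (fun t => ρ * t) hsub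
    simp only [smul_eq_mul, ← mul_assoc, mul_inv_cancel₀ hρ.ne', one_mul] at this
    rw [← this, show ρ * ρ ^ (d - 1) * Jint d (s * ρ) = (ρ * ρ ^ (d - 1)) * Jint d (s * ρ) by ring,
      show ρ * ρ ^ (d - 1) = ρ ^ d by
        conv_rhs => rw [show d = (d - 1) + 1 from (Nat.succ_pred_eq_of_pos hd).symm]
        rw [pow_succ]; ring]
  rw [h2]
  simp only [Measure.real]
  ring

lemma pcf_eq_Jint (d : ℕ) (z : ℝ) :
    pcf d z = Real.exp (-z ^ 2 / 4) / Real.Gamma d * Jint d (-z) := by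
  rw [pcf, Jint]
  congr 1
  refine setIntegral_congr_fun measurableSet_Ioi fun x _ => ?_
  rw [show -(x * z) - x ^ 2 / 2 = -z * x - x ^ 2 / 2 by ring]

set_option maxHeartbeats 2000000 in
/-- Credibility regions: for an `L`-Lipschitz potential `f` with `C_π ∈ (0,∞)` and any
measurable set `Cset` with `π_ρ`-mass `1 − α`, the `π`-mass of `Cset` is sandwiched between
`(1−α) N_ρ / D_{−d}(−Lρ)` and `min(1, (1−α) N_ρ / D_{−d}(Lρ))`. -/
theorem statement12 {d : ℕ} (hd : 1 ≤ d) (f : En d → ℝ) (L : ℝ)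
    (hLip : ∀ θ η : En d, |f θ - f η| ≤ L * ‖θ - η‖)
    (hint : Integrable (fun θ : En d => Real.exp (-f θ)))
    (hpos : 0 < ∫ θ : En d, Real.exp (-f θ))
    (ρ : ℝ) (hρ : 0 < ρ)
    (N : ℝ) (hN : N = 2 ^ ((d : ℝ) / 2 - 1) * Real.Gamma ((d : ℝ) / 2) /
      (Real.Gamma d * Real.exp (L ^ 2 * ρ ^ 2 / 4)))
    (α : ℝ) (hα : α ∈ Set.Ioo (0 : ℝ) 1)
    (Cset : Set (En d)) (hCset : MeasurableSet Cset)
    (hcred : (∫ θ in Cset, gaussSmoothed f ρ θ) = 1 - α) :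
    (1 - α) * N / pcf d (-(L * ρ)) ≤ (∫ θ in Cset, nrmDensity f θ) ∧
      (∫ θ in Cset, nrmDensity f θ) ≤ min 1 ((1 - α) * N / pcf d (L * ρ)) := by
  -- basic positivity facts
  have hL0 : 0 ≤ L := by
    have h := hLip 0 (EuclideanSpace.single (⟨0, hd⟩ : Fin d) (1:ℝ))
    have hn : ‖(0 : En d) - EuclideanSpace.single (⟨0, hd⟩ : Fin d) (1:ℝ)‖ = 1 := by
      rw [zero_sub, norm_neg, EuclideanSpace.norm_single]
      norm_num
    rw [hn, mul_one] at h
    exact (abs_nonneg _).trans h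
  have hf_cont : Continuous f := by
    refine (LipschitzWith.of_dist_le_mul (K := Real.toNNReal L) fun θ η => ?_).continuous
    rw [Real.dist_eq, dist_eq_norm, Real.coe_toNNReal _ hL0]
    exact hLip θ η
  -- the Gaussian-type integrals
  set I : ℝ → ℝ := fun s => ∫ w : En d, Real.exp (s * ‖w‖ - ‖w‖ ^ 2 / (2 * ρ ^ 2)) with hI_def
  have hIfun : ∀ s : ℝ, Integrable
      (fun w : En d => Real.exp (s * ‖w‖ - ‖w‖ ^ 2 / (2 * ρ ^ 2))) := by
    intro s
    refine (integrable_aux d s (b := 1/(2*ρ^2)) (by positivity)).congr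
      (Filter.Eventually.of_forall fun w => ?_)
    show Real.exp (s * ‖w‖ - 1/(2*ρ^2) * ‖w‖ ^ 2) = Real.exp (s * ‖w‖ - ‖w‖ ^ 2 / (2 * ρ ^ 2))
    rw [show s * ‖w‖ - 1/(2*ρ^2) * ‖w‖ ^ 2 = s * ‖w‖ - ‖w‖ ^ 2 / (2 * ρ ^ 2) by ring]
  set κ : ℝ := (d : ℝ) * (volume (Metric.ball (0 : En d) 1)).toReal * ρ ^ d with hκ_def
  have hκpos : 0 < κ := by
    have h1 : 0 < volume (Metric.ball (0 : En d) 1) := Metric.measure_ball_pos _ _ one_pos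
    have h2 : volume (Metric.ball (0 : En d) 1) < ⊤ := measure_ball_lt_top
    have h3 : 0 < (volume (Metric.ball (0 : En d) 1)).toReal :=
      ENNReal.toReal_pos h1.ne' h2.ne
    have hd' : (0:ℝ) < d := by exact_mod_cast hd
    positivity
  have hIeq : ∀ s : ℝ, I s = κ * Jint d (s * ρ) := fun s => I_polar hd hρ s
  have hIpos : ∀ s : ℝ, 0 < I s := fun s => by
    rw [hIeq s]; exact mul_pos hκpos (Jint_pos hd _)
  -- the smoothing kernel integral g
  set g : En d → ℝ := fun θ => ∫ z : En d, Real.exp (-f z - ‖z - θ‖ ^ 2 / (2 * ρ ^ 2))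
    with hg_def
  have hFcont : Continuous
      (fun p : En d × En d => Real.exp (-f p.2 - ‖p.2 - p.1‖ ^ 2 / (2 * ρ ^ 2))) := by
    refine Real.continuous_exp.comp ?_
    exact ((hf_cont.comp continuous_snd).neg).sub
      (((continuous_snd.sub continuous_fst).norm.pow 2).div_const _)
  have hg_trans : ∀ θ : En d,
      g θ = ∫ w : En d, Real.exp (-f (θ + w) - ‖w‖ ^ 2 / (2 * ρ ^ 2)) := by
    intro θ
    show (∫ z : En d, Real.exp (-f z - ‖z - θ‖ ^ 2 / (2 * ρ ^ 2))) = _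
    rw [← integral_add_left_eq_self
      (fun z : En d => Real.exp (-f z - ‖z - θ‖ ^ 2 / (2 * ρ ^ 2))) θ]
    exact integral_congr_ae (Filter.Eventually.of_forall fun w => by
      simp [add_sub_cancel_left])
  have hmid : ∀ θ : En d, Integrable
      (fun w : En d => Real.exp (-f (θ + w) - ‖w‖ ^ 2 / (2 * ρ ^ 2))) := by
    intro θ
    refine ((hIfun L).const_mul (Real.exp (-f θ))).mono' ?_ ?_
    · exact (Real.continuous_exp.comp (((hf_cont.comp
        (continuous_const.add continuous_id)).neg).sub
        ((continuous_norm.pow 2).div_const _))).aestronglyMeasurable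
    · refine Filter.Eventually.of_forall fun w => ?_
      rw [Real.norm_eq_abs, abs_of_nonneg (Real.exp_pos _).le, ← Real.exp_add]
      apply Real.exp_le_exp.2
      have h := (abs_le.1 (hLip (θ + w) θ)).1
      rw [add_sub_cancel_left] at h
      linarith
  have hg_low : ∀ θ : En d, Real.exp (-f θ) * I (-L) ≤ g θ := by
    intro θ
    rw [hg_trans θ, hI_def, ← integral_const_mul]
    refine integral_mono ((hIfun (-L)).const_mul _) (hmid θ) fun w => ?_
    rw [← Real.exp_add]
    apply Real.exp_le_exp.2
    have h := (abs_le.1 (hLip (θ + w) θ)).2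
    rw [add_sub_cancel_left] at h
    nlinarith [h]
  have hg_up : ∀ θ : En d, g θ ≤ Real.exp (-f θ) * I L := by
    intro θ
    rw [hg_trans θ, hI_def, ← integral_const_mul]
    refine integral_mono (hmid θ) ((hIfun L).const_mul _) fun w => ?_
    rw [← Real.exp_add]
    apply Real.exp_le_exp.2
    have h := (abs_le.1 (hLip (θ + w) θ)).1
    rw [add_sub_cancel_left] at h
    linarith
  have hg_nonneg : ∀ θ, 0 ≤ g θ :=
    fun θ => integral_nonneg fun z => (Real.exp_pos _).le
  have hg_meas : AEStronglyMeasurable g volume :=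
    (hFcont.stronglyMeasurable.integral_prod_right').aestronglyMeasurable
  have hg_int : Integrable g := by
    refine (hint.mul_const (I L)).mono' hg_meas ?_
    refine Filter.Eventually.of_forall fun θ => ?_
    rw [Real.norm_eq_abs, abs_of_nonneg (hg_nonneg θ)]
    exact hg_up θ
  have hgz : ∀ θ : En d, Integrable
      (fun z : En d => Real.exp (-f z - ‖z - θ‖ ^ 2 / (2 * ρ ^ 2))) := by
    intro θ
    have h := (hmid θ).comp_add_left (-θ)
    refine h.congr (Filter.Eventually.of_forall fun z => ?_)
    simp [neg_add_eq_sub]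
  -- Fubini: total mass of g
  have hF_int : Integrable
      (fun p : En d × En d => Real.exp (-f p.2 - ‖p.2 - p.1‖ ^ 2 / (2 * ρ ^ 2)))
      (volume.prod volume) := by
    rw [integrable_prod_iff hFcont.aestronglyMeasurable]
    constructor
    · exact Filter.Eventually.of_forall fun θ => hgz θ
    · refine hg_int.congr (Filter.Eventually.of_forall fun θ => ?_)
      show g θ = ∫ z : En d, ‖Real.exp (-f z - ‖z - θ‖ ^ 2 / (2 * ρ ^ 2))‖
      refine integral_congr_ae (Filter.Eventually.of_forall fun z => ?_)
      show Real.exp (-f z - ‖z - θ‖ ^ 2 / (2 * ρ ^ 2))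
        = ‖Real.exp (-f z - ‖z - θ‖ ^ 2 / (2 * ρ ^ 2))‖
      rw [Real.norm_eq_abs, abs_of_nonneg (Real.exp_pos _).le]
  have hCg : (∫ θ : En d, g θ) = (∫ z : En d, Real.exp (-f z)) * I 0 := by
    have hswap := integral_integral_swap
      (f := fun (θ : En d) (z : En d) => Real.exp (-f z - ‖z - θ‖ ^ 2 / (2 * ρ ^ 2))) hF_int
    rw [hg_def]
    rw [hswap, ← integral_mul_const]
    refine integral_congr_ae (Filter.Eventually.of_forall fun z => ?_)
    have h1 : ∀ θ : En d, Real.exp (-f z - ‖z - θ‖ ^ 2 / (2 * ρ ^ 2))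
        = Real.exp (-f z) * Real.exp (0 * ‖θ - z‖ - ‖θ - z‖ ^ 2 / (2 * ρ ^ 2)) := by
      intro θ
      rw [← Real.exp_add, norm_sub_rev]
      ring_nf
    simp only [h1]
    rw [integral_const_mul, hI_def]
    congr 1
    exact integral_sub_right_eq_self
      (fun w : En d => Real.exp (0 * ‖w‖ - ‖w‖ ^ 2 / (2 * ρ ^ 2))) z
  -- rewrite credible-set condition
  set Cπ : ℝ := ∫ θ : En d, Real.exp (-f θ) with hCπ_def
  have hCgpos : 0 < ∫ θ : En d, g θ := by
    rw [hCg]; exact mul_pos hpos (hIpos 0)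
  have hcred' : (∫ θ in Cset, g θ) = (1 - α) * (Cπ * I 0) := by
    have h1 : (∫ θ in Cset, gaussSmoothed f ρ θ)
        = (∫ θ in Cset, g θ) / ∫ θ : En d, g θ := by
      simp only [gaussSmoothed]
      rw [integral_div]
    rw [h1] at hcred
    rw [div_eq_iff hCgpos.ne'] at hcred
    rw [hcred, hCg]
  -- sandwich the set integral
  set P : ℝ := ∫ θ in Cset, Real.exp (-f θ) with hP_def
  have hlow : P * I (-L) ≤ (1 - α) * (Cπ * I 0) := by
    rw [← hcred']
    calc P * I (-L) = ∫ θ in Cset, Real.exp (-f θ) * I (-L) := by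
          rw [hP_def, ← integral_mul_const]
      _ ≤ ∫ θ in Cset, g θ := by
          refine setIntegral_mono_on ((hint.mul_const _).integrableOn)
            (hg_int.integrableOn) hCset fun θ _ => hg_low θ
  have hup : (1 - α) * (Cπ * I 0) ≤ P * I L := by
    rw [← hcred']
    calc (∫ θ in Cset, g θ) ≤ ∫ θ in Cset, Real.exp (-f θ) * I L := by
          refine setIntegral_mono_on (hg_int.integrableOn)
            ((hint.mul_const _).integrableOn) hCset fun θ _ => hg_up θ
      _ = P * I L := by rw [hP_def, ← integral_mul_const]
  have hP_nonneg : 0 ≤ P := setIntegral_nonneg hCset fun θ _ => (Real.exp_pos _).le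
  have hP_le : P ≤ Cπ :=
    setIntegral_le_integral hint (Filter.Eventually.of_forall fun θ => (Real.exp_pos _).le)
  -- the target integral
  have htarget : (∫ θ in Cset, nrmDensity f θ) = P / Cπ := by
    simp only [nrmDensity]
    rw [integral_div]
  -- ratio identities
  set J0 : ℝ := Jint d 0 with hJ0_def
  set JL : ℝ := Jint d (L * ρ) with hJL_def
  set JnL : ℝ := Jint d (-(L * ρ)) with hJnL_def
  have hJ0pos : 0 < J0 := Jint_pos hd _
  have hJLpos : 0 < JL := Jint_pos hd _
  have hJnLpos : 0 < JnL := Jint_pos hd _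
  have hΓpos : 0 < Real.Gamma d := Real.Gamma_pos_of_pos (by exact_mod_cast hd)
  have hN' : N = J0 / (Real.Gamma d * Real.exp (L ^ 2 * ρ ^ 2 / 4)) := by
    rw [hN, hJ0_def, Jint_zero hd]
  have hE : Real.exp (L ^ 2 * ρ ^ 2 / 4) * Real.exp (-(L * ρ) ^ 2 / 4) = 1 := by
    rw [← Real.exp_add, show L ^ 2 * ρ ^ 2 / 4 + -(L * ρ) ^ 2 / 4 = 0 by ring, Real.exp_zero]
  have hpcf_neg : pcf d (-(L * ρ)) = Real.exp (-(L * ρ) ^ 2 / 4) / Real.Gamma d * JL := by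
    rw [pcf_eq_Jint, neg_neg, neg_sq]
  have hpcf_pos : pcf d (L * ρ) = Real.exp (-(L * ρ) ^ 2 / 4) / Real.Gamma d * JnL := by
    rw [pcf_eq_Jint]
  have hexp_ne : Real.exp (-(L * ρ) ^ 2 / 4) ≠ 0 := (Real.exp_pos _).ne'
  have hexp_ne' : Real.exp (L ^ 2 * ρ ^ 2 / 4) ≠ 0 := (Real.exp_pos _).ne'
  have hratio_low : N / pcf d (-(L * ρ)) = J0 / JL := by
    rw [hN', hpcf_neg]
    field_simp
    have hE2 : Real.exp (L ^ 2 * ρ ^ 2 / 4) * Real.exp (-(L ^ 2 * ρ ^ 2 / 4)) = 1 := by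
      rw [← Real.exp_add, add_neg_cancel, Real.exp_zero]
    linear_combination -hE2
  have hratio_up : N / pcf d (L * ρ) = J0 / JnL := by
    rw [hN', hpcf_pos]
    field_simp
    have hE2 : Real.exp (L ^ 2 * ρ ^ 2 / 4) * Real.exp (-(L ^ 2 * ρ ^ 2 / 4)) = 1 := by
      rw [← Real.exp_add, add_neg_cancel, Real.exp_zero]
    linear_combination -hE2
  -- conclude
  have hup' : (1 - α) * (Cπ * (κ * J0)) ≤ P * (κ * JL) := by
    have h := hup
    rw [hIeq 0, hIeq L] at h
    simpa only [zero_mul] using h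
  have hlow' : P * (κ * JnL) ≤ (1 - α) * (Cπ * (κ * J0)) := by
    have h := hlow
    rw [hIeq 0, hIeq (-L)] at h
    simpa only [zero_mul, neg_mul L ρ] using h
  constructor
  · rw [htarget, mul_div_assoc, hratio_low, ← mul_div_assoc, div_le_div_iff₀ hJLpos hpos]
    have h2 : ((1 - α) * J0 * Cπ) * κ ≤ (P * JL) * κ := by nlinarith [hup']
    exact le_of_mul_le_mul_right h2 hκpos
  · rw [htarget]
    refine le_min ((div_le_one hpos).2 hP_le) ?_
    rw [mul_div_assoc, hratio_up, ← mul_div_assoc, div_le_div_iff₀ hpos hJnLpos]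
    have h2 : (P * JnL) * κ ≤ ((1 - α) * J0 * Cπ) * κ := by nlinarith [hlow']
    exact le_of_mul_le_mul_right h2 hκpos
end
end

section
/- Let d ≥ 1, ρ > 0, and let f : ℝ^d → ℝ be convex and continuously differentiable. Then for every θ ∈ ℝ^d, ∫_{ℝ^d} exp(f(θ) − f(z) − ‖θ − z‖₂²/(2ρ²)) dz ≤ exp(ρ² ‖∇f(θ)‖₂² / 2) · (2πρ²)^{d/2}. -/
open MeasureTheory

noncomputable section

/-- Upper bound on the smoothing integral for a convex continuously differentiable `f`:
`∫ exp(f(θ) − f(z) − ‖θ−z‖²/(2ρ²)) dz ≤ exp(ρ²‖∇f(θ)‖²/2)(2πρ²)^{d/2}`. -/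
theorem statement16 {d : ℕ} (hd : 1 ≤ d) (ρ : ℝ) (hρ : 0 < ρ) (f : En d → ℝ)
    (hconv : ConvexOn ℝ Set.univ f) (hC1 : ContDiff ℝ 1 f) (θ : En d) :
    (∫ z : En d, Real.exp (f θ - f z - ‖θ - z‖ ^ 2 / (2 * ρ ^ 2))) ≤
      Real.exp (ρ ^ 2 * ‖gradient f θ‖ ^ 2 / 2) * (2 * Real.pi * ρ ^ 2) ^ ((d : ℝ) / 2) := by
  classical
  have hb : (0:ℝ) < 1 / (2 * ρ ^ 2) := by positivity
  set g : En d := gradient f θ with hg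
  have hdiff : Differentiable ℝ f := hC1.differentiable one_ne_zero
  have hinner : ∀ v : En d, (inner ℝ g v : ℝ) = fderiv ℝ f θ v := by
    intro v
    simp only [hg, gradient]
    exact InnerProductSpace.toDual_symm_apply
  -- subgradient inequality from convexity
  have key : ∀ z : En d, f θ - f z ≤ (inner ℝ g (θ - z) : ℝ) := by
    intro z
    have hφconv : ConvexOn ℝ Set.univ (f ∘ (AffineMap.lineMap θ z : ℝ →ᵃ[ℝ] En d)) := by
      simpa using hconv.comp_affineMap (AffineMap.lineMap θ z)
    have hcurve : HasDerivAt (fun t : ℝ => (AffineMap.lineMap θ z : ℝ →ᵃ[ℝ] En d) t)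
        (z - θ) 0 := by
      have heqf : (fun t : ℝ => (AffineMap.lineMap θ z : ℝ →ᵃ[ℝ] En d) t)
          = fun t : ℝ => t • (z - θ) + θ := by
        funext t
        rw [AffineMap.lineMap_apply_module']
      rw [heqf]
      simpa using ((hasDerivAt_id (0:ℝ)).smul_const (z - θ)).add_const θ
    have hφ : HasDerivAt (f ∘ (AffineMap.lineMap θ z : ℝ →ᵃ[ℝ] En d))
        ((inner ℝ g (z - θ) : ℝ)) 0 := by
      have h0 : (AffineMap.lineMap θ z : ℝ →ᵃ[ℝ] En d) (0:ℝ) = θ := by simp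
      have hf' : HasFDerivAt f (fderiv ℝ f θ) ((AffineMap.lineMap θ z : ℝ →ᵃ[ℝ] En d) (0:ℝ)) := by
        rw [h0]; exact (hdiff θ).hasFDerivAt
      have := hf'.comp_hasDerivAt 0 hcurve
      simpa [hinner] using this
    have hle := hφconv.le_slope_of_hasDerivAt (Set.mem_univ (0:ℝ)) (Set.mem_univ (1:ℝ))
      one_pos hφ
    rw [slope_def_field] at hle
    simp only [Function.comp_apply, AffineMap.lineMap_apply_module, one_smul, zero_smul,
      sub_self, sub_add_cancel, zero_add, add_zero, sub_zero, div_one] at hle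
    have h2 : (inner ℝ g (θ - z) : ℝ) = -(inner ℝ g (z - θ) : ℝ) := by
      rw [← inner_neg_right, neg_sub]
    linarith
  set μ : En d := θ - (ρ^2) • g with hμ
  have hsq : ∀ z : En d, (inner ℝ g (θ - z) : ℝ) - ‖θ - z‖^2/(2*ρ^2)
      = ρ^2*‖g‖^2/2 - ‖z - μ‖^2/(2*ρ^2) := by
    intro z
    have hz : z - μ = -((θ - z) - (ρ^2) • g) := by
      simp only [hμ]; abel
    have h1 : ‖z - μ‖^2 = ‖θ - z‖^2 - 2*(ρ^2*(inner ℝ g (θ - z):ℝ)) + (ρ^2)^2*‖g‖^2 := by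
      rw [hz, norm_neg, norm_sub_sq_real, real_inner_smul_right, real_inner_comm, norm_smul,
        mul_pow, Real.norm_eq_abs, abs_of_pos (by positivity : (0:ℝ) < ρ^2)]
    rw [h1]; field_simp; ring
  have hpt : ∀ z : En d, Real.exp (f θ - f z - ‖θ - z‖^2/(2*ρ^2))
      ≤ Real.exp (ρ^2*‖g‖^2/2) * Real.exp (-(1/(2*ρ^2)) * ‖z - μ‖^2) := by
    intro z
    rw [← Real.exp_add]
    apply Real.exp_le_exp.2
    have h3 : -(1/(2*ρ^2)) * ‖z - μ‖^2 = -(‖z - μ‖^2/(2*ρ^2)) := by ring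
    have := key z
    have h2 := hsq z
    linarith
  -- integrability of the Gaussian
  have hI0 : Integrable (fun v : En d => Real.exp (-(1/(2*ρ^2)) * ‖v‖^2)) := by
    have h := (GaussianFourier.integrable_cexp_neg_mul_sq_norm_add (V := En d)
      (b := ((1/(2*ρ^2) : ℝ) : ℂ)) (by simp only [Complex.ofReal_re]; exact hb) 0 (0 : En d)).norm
    have heq : ∀ v : En d,
        ‖Complex.exp (-((1/(2*ρ^2) : ℝ) : ℂ) * (‖v‖ : ℂ)^2 + 0 * (inner ℝ (0 : En d) v : ℝ))‖
          = Real.exp (-(1/(2*ρ^2)) * ‖v‖^2) := by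
      intro v
      rw [Complex.norm_exp]
      congr 1
      have hc : (-((1/(2*ρ^2) : ℝ) : ℂ) * (‖v‖ : ℂ)^2 + 0 * ((inner ℝ (0 : En d) v : ℝ) : ℂ))
          = ((-(1/(2*ρ^2)) * ‖v‖^2 : ℝ) : ℂ) := by
        push_cast
        ring
      rw [hc, Complex.ofReal_re]
    refine h.congr ?_
    exact Filter.Eventually.of_forall heq
  have hIG : Integrable (fun z : En d =>
      Real.exp (ρ^2*‖g‖^2/2) * Real.exp (-(1/(2*ρ^2)) * ‖z - μ‖^2)) :=
    (hI0.comp_sub_right μ).const_mul _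
  have hmono : (∫ z : En d, Real.exp (f θ - f z - ‖θ - z‖^2/(2*ρ^2)))
      ≤ ∫ z : En d, Real.exp (ρ^2*‖g‖^2/2) * Real.exp (-(1/(2*ρ^2)) * ‖z - μ‖^2) :=
    integral_mono_of_nonneg (Filter.Eventually.of_forall fun z => (Real.exp_pos _).le)
      hIG (Filter.Eventually.of_forall hpt)
  refine hmono.trans ?_
  rw [integral_const_mul]
  have htrans : (∫ z : En d, Real.exp (-(1/(2*ρ^2)) * ‖z - μ‖^2))
      = ∫ z : En d, Real.exp (-(1/(2*ρ^2)) * ‖z‖^2) :=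
    integral_sub_right_eq_self (fun z : En d => Real.exp (-(1/(2*ρ^2)) * ‖z‖^2)) μ
  rw [htrans, GaussianFourier.integral_rexp_neg_mul_sq_norm hb]
  have hbase : Real.pi / (1/(2*ρ^2)) = 2 * Real.pi * ρ^2 := by
    field_simp
  have hrank : (Module.finrank ℝ (En d) : ℝ) = (d : ℝ) := by
    rw [finrank_euclideanSpace_fin]
  rw [hbase, hrank]
end
end
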